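/- Fix a generalized metric G^b on M determined by (g,b). The TM-torsion free G^b-metric connections on 𝕋M are classified by 3-forms φ ∈ Ω³(M): for every φ there is a unique TM-torsion free G^b-metric connection D^{φ,b} whose G^b-eigendecomposition is D^{φ,b}_{x^{b±}} y^{b±} = ∇_X Y + (b±g)(∇_X Y) and D^{φ,b}_{x^{b∓}} y^{b±} = ∇^{±φ}_X Y + (b±g)(∇^{±φ}_X Y); conversely, every TM-torsion free G^b-metric connection D^𝕋 equals D^{φ,b} for exactly one φ ∈ Ω³(M), recovered by φ(X,Y,Z) = 2 g(π(D^𝕋_{x^{b−}} y^{b+}) − ∇_X Y, Z). Moreover, in the splitting 𝕋M = TM ⊕ T*M, D^{φ,b}_{e^b x}(e^b y) = e^b[ ∇_X y + (1/4) g^{-1}(ι_{g^{-1}η} ι_X φ − ι_Y ι_{g^{-1}ξ} φ) + (1/4)(ι_Y ι_X φ − ι_{g^{-1}η} ι_{g^{-1}ξ} φ) ] for x = X+ξ, y = Y+η, where e^b(X+ξ) = X + ι_X b + ξ. -/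

import Mathlib

/-!
An algebraic model of generalized geometry on a smooth manifold `M`:
`C` plays the role of the smooth functions `C^∞(M)`, `Xv` the `C`-module of
vector fields `Γ(TM)` (acting on functions via `act` and with Lie bracket `lie`),
`Θ` the `C`-module of 1-forms `Γ(T*M)` (with evaluation `ev`), and
`TT Xv Θ := Xv × Θ` the sections of the generalized tangent bundle
`𝕋M = TM ⊕ T*M`.
-/

noncomputable section

namespace GenGeom

section Core

variable {C : Type} [CommRing C] [Algebra ℝ C]
variable {Xv : Type} [AddCommGroup Xv] [Module C Xv] [Module ℝ Xv] [IsScalarTower ℝ C Xv]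
variable {Θ : Type} [AddCommGroup Θ] [Module C Θ] [Module ℝ Θ] [IsScalarTower ℝ C Θ]

/-- Sections of the generalized tangent bundle `𝕋M = TM ⊕ T*M`. -/
abbrev TT (Xv Θ : Type) := Xv × Θ

/-- The natural pairing `⟨X+ξ, Y+η⟩ = ½(η(X) + ξ(Y))` on `𝕋M`. -/
def pairTT (ev : Θ → Xv → C) (x y : TT Xv Θ) : C :=
  (2:ℝ)⁻¹ • (ev x.2 y.1 + ev y.2 x.1)

/-- Axioms for the action of vector fields on functions and the Lie bracket. -/
structure IsDiffStructure (act : Xv → C → C) (lie : Xv → Xv → Xv) : Prop where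
  act_add_left : ∀ Z W f, act (Z + W) f = act Z f + act W f
  act_smul_left : ∀ (f : C) Z g, act (f • Z) g = f * act Z g
  act_add_right : ∀ Z f g, act Z (f + g) = act Z f + act Z g
  act_mul_right : ∀ Z f g, act Z (f * g) = f * act Z g + g * act Z f
  act_const : ∀ Z (r : ℝ), act Z (algebraMap ℝ C r) = 0
  lie_antisymm : ∀ Z W, lie Z W = - lie W Z
  lie_add_right : ∀ Z W U, lie Z (W + U) = lie Z W + lie Z U
  lie_smul_right : ∀ Z (f : C) W, lie Z (f • W) = act Z f • W + f • lie Z W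
  lie_jacobi : ∀ Z W U, lie (lie Z W) U = lie Z (lie W U) - lie W (lie Z U)
  lie_act : ∀ Z W f, act (lie Z W) f = act Z (act W f) - act W (act Z f)
  act_faithful : ∀ Z, (∀ f, act Z f = 0) → Z = 0

/-- Axioms for the evaluation of 1-forms on vector fields; on a smooth manifold
`Γ(T*M) ≅ Hom_{C^∞}(Γ(TM), C^∞)`, so `ev` is bilinear and faithful. -/
structure IsEvStructure (ev : Θ → Xv → C) : Prop where
  add_left : ∀ ξ η X, ev (ξ + η) X = ev ξ X + ev η X
  smul_left : ∀ (f : C) ξ X, ev (f • ξ) X = f * ev ξ X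
  add_right : ∀ ξ X Y, ev ξ (X + Y) = ev ξ X + ev ξ Y
  smul_right : ∀ ξ (f : C) X, ev ξ (f • X) = f * ev ξ X
  ev_injective : ∀ ξ η, (∀ X, ev ξ X = ev η X) → ξ = η

/-- A generalized connection on `𝕋M`. -/
structure IsGenConn (act : Xv → C → C) (D : TT Xv Θ → TT Xv Θ → TT Xv Θ) : Prop where
  add_left : ∀ x y z, D (x + y) z = D x z + D y z
  smul_left : ∀ (f : C) x y, D (f • x) y = f • D x y
  add_right : ∀ x y z, D x (y + z) = D x y + D x z
  leibniz : ∀ x (f : C) y, D x (f • y) = act x.1 f • y + f • D x y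

/-- A generalized connection on a vector bundle with `C`-module of sections `V`. -/
structure IsGenConnOn {V : Type} [AddCommGroup V] [Module C V]
    (act : Xv → C → C) (DV : TT Xv Θ → V → V) : Prop where
  add_left : ∀ x y v, DV (x + y) v = DV x v + DV y v
  smul_left : ∀ (f : C) x v, DV (f • x) v = f • DV x v
  add_right : ∀ x v w, DV x (v + w) = DV x v + DV x w
  leibniz : ∀ x (f : C) v, DV x (f • v) = act x.1 f • v + f • DV x v

/-- The diamond bracket `x ◇ y = D_x y - D_y x` of a generalized connection. -/
def diamond (D : TT Xv Θ → TT Xv Θ → TT Xv Θ) (x y : TT Xv Θ) : TT Xv Θ := D x y - D y x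

/-- The Jacobiator `[x ◇ y ◇ z] = (x ◇ y) ◇ z + (y ◇ z) ◇ x + (z ◇ x) ◇ y`. -/
def jacobiator (D : TT Xv Θ → TT Xv Θ → TT Xv Θ) (x y z : TT Xv Θ) : TT Xv Θ :=
  diamond D (diamond D x y) z + diamond D (diamond D y z) x + diamond D (diamond D z x) y

/-- `TM`-torsion freeness: `π(x ◇ y) = [π x, π y]`. -/
def TorsionFree (lie : Xv → Xv → Xv) (D : TT Xv Θ → TT Xv Θ → TT Xv Θ) : Prop :=
  ∀ x y : TT Xv Θ, (diamond D x y).1 = lie x.1 y.1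

/-- Raw `𝕋M`-forms of degree `k`; genuine forms `Ω^k_𝕋(M) = Γ(Λ^k 𝕋M)` are the
`C`-multilinear alternating ones (cf. `IsFormP`), regarded as forms via `2⟨,⟩`. -/
abbrev Wform (C Xv Θ : Type) (k : ℕ) : Type := (Fin k → TT Xv Θ) → C

/-- Being a genuine (C-multilinear alternating) `𝕋M`-form. -/
def IsFormP {k : ℕ} (θ : Wform C Xv Θ k) : Prop :=
  (∀ (v : Fin k → TT Xv Θ) (i : Fin k) (x y : TT Xv Θ),
      θ (Function.update v i (x + y)) = θ (Function.update v i x) + θ (Function.update v i y)) ∧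
  (∀ (v : Fin k → TT Xv Θ) (i : Fin k) (f : C) (x : TT Xv Θ),
      θ (Function.update v i (f • x)) = f * θ (Function.update v i x)) ∧
  (∀ (v : Fin k → TT Xv Θ) (i j : Fin k), i ≠ j → v i = v j → θ v = 0)

/-- Covariant derivative of an `A`-valued `𝕋M`-form along `x`. -/
def covDG {A : Type} [AddCommGroup A] (actA : Xv → A → A)
    (D : TT Xv Θ → TT Xv Θ → TT Xv Θ) (x : TT Xv Θ) {k : ℕ}
    (θ : (Fin k → TT Xv Θ) → A) : (Fin k → TT Xv Θ) → A :=
  fun v => actA x.1 (θ v) - ∑ i, θ (Function.update v i (D x (v i)))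

/-- The derivation `d^𝕋` of `𝕋M`-forms induced by a generalized connection:
`(d^𝕋θ)(x₀,…,x_k) = Σ_i (−1)^i (D_{x_i}θ)(x₀,…,x̂_i,…,x_k)`. -/
def dTG {A : Type} [AddCommGroup A] (actA : Xv → A → A)
    (D : TT Xv Θ → TT Xv Θ → TT Xv Θ) {k : ℕ}
    (θ : (Fin k → TT Xv Θ) → A) : (Fin (k+1) → TT Xv Θ) → A :=
  fun v => ∑ i : Fin (k+1), ((-1 : ℤ)^(i : ℕ)) • covDG actA D (v i) θ (i.removeNth v)

/-- `d^𝕋` on scalar `𝕋M`-forms. -/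
abbrev dT (act : Xv → C → C) (D : TT Xv Θ → TT Xv Θ → TT Xv Θ) {k : ℕ}
    (θ : Wform C Xv Θ k) : Wform C Xv Θ (k+1) := dTG act D θ

/-- The submodule generated by the image of `𝒥^𝕋 = d^𝕋 ∘ d^𝕋` in each degree. -/
def JsubG {A : Type} [AddCommGroup A] (R : Type) [CommRing R] [Module R A]
    (actA : Xv → A → A) (D : TT Xv Θ → TT Xv Θ → TT Xv Θ) :
    (k : ℕ) → Submodule R ((Fin k → TT Xv Θ) → A)
  | 0 => ⊥
  | 1 => ⊥
  | (k+2) => Submodule.span R {ψ | ∃ θ : (Fin k → TT Xv Θ) → A, ψ = dTG actA D (dTG actA D θ)}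

/-- Contraction `ι_x` of `𝕋M`-forms (under the identification via `2⟨,⟩`). -/
def iotaTT (x : TT Xv Θ) {k : ℕ} (θ : Wform C Xv Θ (k+1)) : Wform C Xv Θ k :=
  fun v => θ (Fin.cons x v)

/-- A Riemannian metric, presented by its musical maps `♭ = gf` and `♯ = gs`. -/
structure IsRiemannian (ev : Θ → Xv → C) (gf : Xv → Θ) (gs : Θ → Xv) : Prop where
  symm : ∀ X Y, ev (gf X) Y = ev (gf Y) X
  add : ∀ X Y, gf (X + Y) = gf X + gf Y
  smul : ∀ (f : C) X, gf (f • X) = f • gf X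
  sharp_flat : ∀ X, gs (gf X) = X
  flat_sharp : ∀ ξ, gf (gs ξ) = ξ

/-- A 2-form `b`, presented by its interior product `X ↦ ι_X b`. -/
structure IsTwoFormMap (ev : Θ → Xv → C) (ib : Xv → Θ) : Prop where
  skew : ∀ X Y, ev (ib X) Y = - ev (ib Y) X
  add : ∀ X Y, ib (X + Y) = ib X + ib Y
  smul : ∀ (f : C) X, ib (f • X) = f • ib X

/-- The scalar metric `g(X,Y)`. -/
def gsc (ev : Θ → Xv → C) (gf : Xv → Θ) (X Y : Xv) : C := ev (gf X) Y
/-- The scalar 2-form `b(X,Y)`. -/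
def bsc (ev : Θ → Xv → C) (ib : Xv → Θ) (X Y : Xv) : C := ev (ib X) Y

/-- `x^{b+} = X + (b+g)X ∈ C₊^b`. -/
def ebp (gf ib : Xv → Θ) (X : Xv) : TT Xv Θ := (X, ib X + gf X)
/-- `x^{b-} = X + (b−g)X ∈ C₋^b`. -/
def ebm (gf ib : Xv → Θ) (X : Xv) : TT Xv Θ := (X, ib X - gf X)
/-- `e^b(X+ξ) = X + ι_X b + ξ`. -/
def ebMap (ib : Xv → Θ) (x : TT Xv Θ) : TT Xv Θ := (x.1, x.2 + ib x.1)

/-- The generalized metric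
`G^b(X+ξ, Y+η) = ½[g(X,Y) + g⁻¹(ξ − ι_X b, η − ι_Y b)]` as a bilinear form. -/
def GbForm (ev : Θ → Xv → C) (gf : Xv → Θ) (gs : Θ → Xv) (ib : Xv → Θ)
    (x y : TT Xv Θ) : C :=
  (2:ℝ)⁻¹ • (ev (gf x.1) y.1 + ev (x.2 - ib x.1) (gs (y.2 - ib y.1)))

/-- A `G^b`-metric connection: preserves both `⟨,⟩` and `G^b`. -/
def IsMetricConn (act : Xv → C → C) (ev : Θ → Xv → C) (gf : Xv → Θ) (gs : Θ → Xv)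
    (ib : Xv → Θ) (D : TT Xv Θ → TT Xv Θ → TT Xv Θ) : Prop :=
  (∀ x y z, act x.1 (pairTT ev y z) = pairTT ev (D x y) z + pairTT ev y (D x z)) ∧
  (∀ x y z, act x.1 (GbForm ev gf gs ib y z)
      = GbForm ev gf gs ib (D x y) z + GbForm ev gf gs ib y (D x z))

/-- The Levi-Civita connection of `g`. -/
structure IsLeviCivita (act : Xv → C → C) (lie : Xv → Xv → Xv) (ev : Θ → Xv → C)
    (gf : Xv → Θ) (nab : Xv → Xv → Xv) : Prop where
  add_left : ∀ X Y Z, nab (X + Y) Z = nab X Z + nab Y Z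
  smul_left : ∀ (f : C) X Y, nab (f • X) Y = f • nab X Y
  add_right : ∀ X Y Z, nab X (Y + Z) = nab X Y + nab X Z
  leibniz : ∀ X (f : C) Y, nab X (f • Y) = act X f • Y + f • nab X Y
  torsion_free : ∀ X Y, nab X Y - nab Y X = lie X Y
  metric : ∀ X Y Z, act X (gsc ev gf Y Z) = gsc ev gf (nab X Y) Z + gsc ev gf Y (nab X Z)

/-- A 3-form `φ`, presented by its interior products `iph X Y = ι_Y ι_X φ = φ(X,Y,·)`. -/
structure IsThreeFormMap (ev : Θ → Xv → C) (iph : Xv → Xv → Θ) : Prop where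
  add_left : ∀ X Y Z, iph (X + Y) Z = iph X Z + iph Y Z
  smul_left : ∀ (f : C) X Y, iph (f • X) Y = f • iph X Y
  add_right : ∀ X Y Z, iph X (Y + Z) = iph X Y + iph X Z
  smul_right : ∀ X (f : C) Y, iph X (f • Y) = f • iph X Y
  alt12 : ∀ X Y Z, ev (iph X Y) Z = - ev (iph Y X) Z
  alt23 : ∀ X Y Z, ev (iph X Y) Z = - ev (iph X Z) Y

/-- `∇^{+φ}_X Y = ∇_X Y + ½ g⁻¹ ι_Y ι_X φ`. -/
def nabP (gs : Θ → Xv) (nab : Xv → Xv → Xv) (iph : Xv → Xv → Θ) (X Y : Xv) : Xv :=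
  nab X Y + (2:ℝ)⁻¹ • gs (iph X Y)
/-- `∇^{-φ}_X Y = ∇_X Y − ½ g⁻¹ ι_Y ι_X φ`. -/
def nabM (gs : Θ → Xv) (nab : Xv → Xv → Xv) (iph : Xv → Xv → Θ) (X Y : Xv) : Xv :=
  nab X Y - (2:ℝ)⁻¹ • gs (iph X Y)

/-- `C₊^b`-component of `x = X + ξ`: `X₊ = ½(X + g⁻¹(ξ − ι_X b))`. -/
def decP (gs : Θ → Xv) (ib : Xv → Θ) (x : TT Xv Θ) : Xv :=
  (2:ℝ)⁻¹ • (x.1 + gs (x.2 - ib x.1))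
/-- `C₋^b`-component of `x = X + ξ`: `X₋ = ½(X − g⁻¹(ξ − ι_X b))`. -/
def decM (gs : Θ → Xv) (ib : Xv → Θ) (x : TT Xv Θ) : Xv :=
  (2:ℝ)⁻¹ • (x.1 - gs (x.2 - ib x.1))

/-- The `(φ,b)`-connection `D^{φ,b}`, defined through its `G^b`-eigendecomposition. -/
def Dphib (gf : Xv → Θ) (gs : Θ → Xv) (ib : Xv → Θ) (nab : Xv → Xv → Xv)
    (iph : Xv → Xv → Θ) (x y : TT Xv Θ) : TT Xv Θ :=
  ebp gf ib (nab (decP gs ib x) (decP gs ib y))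
  + ebm gf ib (nabM gs nab iph (decP gs ib x) (decM gs ib y))
  + ebp gf ib (nabP gs nab iph (decM gs ib x) (decP gs ib y))
  + ebm gf ib (nab (decM gs ib x) (decM gs ib y))

/-- The generalized Bismut connection `D^{φ,ℬ}`, lift of
`∇^{φ,ℬ}_X y^{b±} = ∇^{±φ}_X Y + (b±g)(∇^{±φ}_X Y)`. -/
def DBismut (gf : Xv → Θ) (gs : Θ → Xv) (ib : Xv → Θ) (nab : Xv → Xv → Xv)
    (iph : Xv → Xv → Θ) (x y : TT Xv Θ) : TT Xv Θ :=
  ebp gf ib (nabP gs nab iph x.1 (decP gs ib y))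
  + ebm gf ib (nabM gs nab iph x.1 (decM gs ib y))

/-- The de Rham differential on functions, as data. -/
structure IsDifferential (act : Xv → C → C) (ev : Θ → Xv → C) (dC : C → Θ) : Prop where
  formula : ∀ f X, ev (dC f) X = act X f

/-- The Lie derivative of 1-forms, as data. -/
structure IsLieDerivTheta (act : Xv → C → C) (lie : Xv → Xv → Xv) (ev : Θ → Xv → C)
    (LTh : Xv → Θ → Θ) : Prop where
  formula : ∀ X η Y, ev (LTh X η) Y = act X (ev η Y) - ev η (lie X Y)

/-- The `γ`-twisted Dorfman bracket
`(X+ξ) *_γ (Y+η) = [X,Y] + L_X η − dι_Y ξ + ι_Yι_X γ` (with `ig X Y = ι_Yι_X γ`). -/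
def dorf (lie : Xv → Xv → Xv) (ev : Θ → Xv → C) (dC : C → Θ) (LTh : Xv → Θ → Θ)
    (ig : Xv → Xv → Θ) (x y : TT Xv Θ) : TT Xv Θ :=
  (lie x.1 y.1, LTh x.1 y.2 - dC (ev x.2 y.1) + ig x.1 y.1)

/-- Closedness `dγ = 0` of a 3-form given by its interior products. -/
def Closed3 (act : Xv → C → C) (lie : Xv → Xv → Xv) (ev : Θ → Xv → C)
    (ig : Xv → Xv → Θ) : Prop :=
  ∀ X Y Z W,
    act X (ev (ig Y Z) W) - act Y (ev (ig X Z) W) + act Z (ev (ig X Y) W)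
      - act W (ev (ig X Y) Z)
      - ev (ig (lie X Y) Z) W + ev (ig (lie X Z) Y) W - ev (ig (lie X W) Y) Z
      - ev (ig (lie Y Z) X) W + ev (ig (lie Y W) X) Z - ev (ig (lie Z W) X) Y = 0

/-- The scalar exterior differential `db(X,Y,Z)` of the 2-form `b`. -/
def dbScalar (act : Xv → C → C) (lie : Xv → Xv → Xv) (ev : Θ → Xv → C)
    (ib : Xv → Θ) (X Y Z : Xv) : C :=
  act X (bsc ev ib Y Z) - act Y (bsc ev ib X Z) + act Z (bsc ev ib X Y)
    - bsc ev ib (lie X Y) Z + bsc ev ib (lie X Z) Y - bsc ev ib (lie Y Z) X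

/-- `φ = γ + db` at the level of scalar 3-forms. -/
def PhiEqGammaPlusDb (act : Xv → C → C) (lie : Xv → Xv → Xv) (ev : Θ → Xv → C)
    (ib : Xv → Θ) (ig iph : Xv → Xv → Θ) : Prop :=
  ∀ X Y Z, ev (iph X Y) Z = ev (ig X Y) Z + dbScalar act lie ev ib X Y Z

/-- Metric compatibility of a `G^b`-metric connection with the Dorfman bracket `*_γ`:
the diamond bracket coincides with `*_γ` on mixed `G^b`-eigensections. -/
def MetricCompatDorfman (lie : Xv → Xv → Xv) (ev : Θ → Xv → C) (dC : C → Θ)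
    (LTh : Xv → Θ → Θ) (ig : Xv → Xv → Θ) (gf ib : Xv → Θ)
    (D : TT Xv Θ → TT Xv Θ → TT Xv Θ) : Prop :=
  ∀ X Y : Xv,
    diamond D (ebp gf ib X) (ebm gf ib Y) = dorf lie ev dC LTh ig (ebp gf ib X) (ebm gf ib Y)

/-- The curvature `ℱ^𝕋_{x,y}(D) = D_x D_y − D_y D_x − D_{x ◇_𝕋 y}` of a generalized
connection `DV` on `V`, with respect to a generalized connection `DT` on `𝕋M`. -/
def curvOn {V : Type} [AddCommGroup V]
    (DT : TT Xv Θ → TT Xv Θ → TT Xv Θ) (DV : TT Xv Θ → V → V)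
    (x y : TT Xv Θ) (v : V) : V :=
  DV x (DV y v) - DV y (DV x v) - DV (diamond DT x y) v

/-- A (global) `g`-orthonormal frame. -/
structure IsONFrame (ev : Θ → Xv → C) (gf : Xv → Θ) {n : ℕ} (e : Fin n → Xv) : Prop where
  ortho : ∀ i j, ev (gf (e i)) (e j) = if i = j then 1 else 0
  complete : ∀ X : Xv, X = ∑ i, gsc ev gf X (e i) • e i

/-- The `(φ,b)`-Ricci curvature operator
`ℛic^{φ,b}(x) = Σ_i [ℛ^{φ,b}_{x,e_i^{b+}} e_i^{b+} + ℛ^{φ,b}_{x,e_i^{b−}} e_i^{b−}]`. -/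
def RicPhib (gf : Xv → Θ) (gs : Θ → Xv) (ib : Xv → Θ) (nab : Xv → Xv → Xv)
    (iph : Xv → Xv → Θ) {n : ℕ} (e : Fin n → Xv) (x : TT Xv Θ) : TT Xv Θ :=
  ∑ i, (curvOn (Dphib gf gs ib nab iph) (Dphib gf gs ib nab iph)
          x (ebp gf ib (e i)) (ebp gf ib (e i))
        + curvOn (Dphib gf gs ib nab iph) (Dphib gf gs ib nab iph)
          x (ebm gf ib (e i)) (ebm gf ib (e i)))

end Core

end GenGeom

end

namespace GenGeom

/-- Covariant derivative of 1-forms by the Levi-Civita connection, as data: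
`(∇_X η)(Y) = X(η(Y)) − η(∇_X Y)`. -/
structure IsNabTheta {C : Type} [CommRing C] [Algebra ℝ C]
    {Xv : Type} [AddCommGroup Xv] [Module C Xv]
    {Θ : Type} [AddCommGroup Θ] [Module C Θ]
    (act : Xv → C → C) (ev : Θ → Xv → C) (nab : Xv → Xv → Xv)
    (nabT : Xv → Θ → Θ) : Prop where
  formula : ∀ X η Y, ev (nabT X η) Y = act X (ev η Y) - ev η (nab X Y)

section Aux
set_option linter.unusedSectionVars false

variable {C : Type} [CommRing C] [Algebra ℝ C]
variable {Xv : Type} [AddCommGroup Xv] [Module C Xv] [Module ℝ Xv] [IsScalarTower ℝ C Xv]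
variable {Θ : Type} [AddCommGroup Θ] [Module C Θ] [Module ℝ Θ] [IsScalarTower ℝ C Θ]
variable {act : Xv → C → C} {lie : Xv → Xv → Xv} {ev : Θ → Xv → C}
variable {gf : Xv → Θ} {gs : Θ → Xv} {ib : Xv → Θ} {nab : Xv → Xv → Xv}
variable {iph : Xv → Xv → Θ}

/- ### Basic linearity consequences -/

lemma ev_zero_left (hev : IsEvStructure ev) (X : Xv) : ev 0 X = 0 := by
  have := hev.add_left 0 0 X; simpa using this

lemma ev_zero_right (hev : IsEvStructure ev) (ξ : Θ) : ev ξ 0 = 0 := by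
  have := hev.add_right ξ 0 0; simpa using this

lemma ev_neg_left (hev : IsEvStructure ev) (ξ : Θ) (X : Xv) : ev (-ξ) X = - ev ξ X := by
  have h := hev.add_left ξ (-ξ) X
  simp only [add_neg_cancel, ev_zero_left hev] at h
  exact eq_neg_of_add_eq_zero_right h.symm

lemma ev_sub_left (hev : IsEvStructure ev) (ξ η : Θ) (X : Xv) :
    ev (ξ - η) X = ev ξ X - ev η X := by
  rw [sub_eq_add_neg, hev.add_left, ev_neg_left hev, sub_eq_add_neg]

lemma ev_neg_right (hev : IsEvStructure ev) (ξ : Θ) (X : Xv) : ev ξ (-X) = - ev ξ X := by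
  have h := hev.add_right ξ X (-X)
  simp only [add_neg_cancel, ev_zero_right hev] at h
  exact eq_neg_of_add_eq_zero_right h.symm

lemma ev_sub_right (hev : IsEvStructure ev) (ξ : Θ) (X Y : Xv) :
    ev ξ (X - Y) = ev ξ X - ev ξ Y := by
  rw [sub_eq_add_neg, hev.add_right, ev_neg_right hev, sub_eq_add_neg]

lemma ev_smulR_left (hev : IsEvStructure ev) (r : ℝ) (ξ : Θ) (X : Xv) :
    ev (r • ξ) X = r • ev ξ X := by
  rw [← smul_one_smul C r ξ, hev.smul_left, smul_one_mul]

/- ### gf, gs, ib, act, nab basics -/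

lemma gf_smulR (hg : IsRiemannian ev gf gs) (r : ℝ) (X : Xv) : gf (r • X) = r • gf X := by
  rw [← smul_one_smul C r X, hg.smul, smul_one_smul]

lemma gf_zero (hg : IsRiemannian ev gf gs) : gf (0 : Xv) = 0 := by
  have := hg.add 0 0; simpa using this

lemma gf_neg (hg : IsRiemannian ev gf gs) (X : Xv) : gf (-X) = - gf X := by
  have h := hg.add X (-X)
  simp only [add_neg_cancel, gf_zero hg] at h
  exact eq_neg_of_add_eq_zero_right h.symm

lemma gf_sub (hg : IsRiemannian ev gf gs) (X Y : Xv) : gf (X - Y) = gf X - gf Y := by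
  rw [sub_eq_add_neg, hg.add, gf_neg hg, sub_eq_add_neg]

lemma gs_add (hg : IsRiemannian ev gf gs) (ξ η : Θ) : gs (ξ + η) = gs ξ + gs η := by
  have h : gf (gs ξ + gs η) = ξ + η := by rw [hg.add, hg.flat_sharp, hg.flat_sharp]
  rw [← h, hg.sharp_flat]

lemma gs_smul (hg : IsRiemannian ev gf gs) (f : C) (ξ : Θ) : gs (f • ξ) = f • gs ξ := by
  have h : gf (f • gs ξ) = f • ξ := by rw [hg.smul, hg.flat_sharp]
  rw [← h, hg.sharp_flat]

lemma gs_smulR (hg : IsRiemannian ev gf gs) (r : ℝ) (ξ : Θ) : gs (r • ξ) = r • gs ξ := by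
  rw [← smul_one_smul C r ξ, gs_smul hg, smul_one_smul]

lemma gs_zero (hg : IsRiemannian ev gf gs) : gs (0 : Θ) = 0 := by
  have := gs_add hg 0 0; simpa using this

lemma gs_neg (hg : IsRiemannian ev gf gs) (ξ : Θ) : gs (-ξ) = - gs ξ := by
  have h := gs_add hg ξ (-ξ)
  simp only [add_neg_cancel, gs_zero hg] at h
  exact eq_neg_of_add_eq_zero_right h.symm

lemma gs_sub (hg : IsRiemannian ev gf gs) (ξ η : Θ) : gs (ξ - η) = gs ξ - gs η := by
  rw [sub_eq_add_neg, gs_add hg, gs_neg hg, sub_eq_add_neg]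

lemma ib_smulR (hb : IsTwoFormMap ev ib) (r : ℝ) (X : Xv) : ib (r • X) = r • ib X := by
  rw [← smul_one_smul C r X, hb.smul, smul_one_smul]

lemma ib_zero (hb : IsTwoFormMap ev ib) : ib (0 : Xv) = 0 := by
  have := hb.add 0 0; simpa using this

lemma ib_neg (hb : IsTwoFormMap ev ib) (X : Xv) : ib (-X) = - ib X := by
  have h := hb.add X (-X)
  simp only [add_neg_cancel, ib_zero hb] at h
  exact eq_neg_of_add_eq_zero_right h.symm

lemma ib_sub (hb : IsTwoFormMap ev ib) (X Y : Xv) : ib (X - Y) = ib X - ib Y := by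
  rw [sub_eq_add_neg, hb.add, ib_neg hb, sub_eq_add_neg]

lemma ev_gf_gs (hev : IsEvStructure ev) (hg : IsRiemannian ev gf gs) (X : Xv) (ξ : Θ) :
    ev (gf X) (gs ξ) = ev ξ X := by
  rw [hg.symm, hg.flat_sharp]

lemma g_nondeg (hev : IsEvStructure ev) (hg : IsRiemannian ev gf gs) (X : Xv)
    (h : ∀ Z, ev (gf X) Z = 0) : X = 0 := by
  have h0 : gf X = 0 := hev.ev_injective _ _ (fun Z => by rw [h Z, ev_zero_left hev])
  have := hg.sharp_flat X
  rw [h0, gs_zero hg] at this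
  exact this.symm

lemma act_zero (hds : IsDiffStructure act lie) (X : Xv) : act X (0 : C) = 0 := by
  have := hds.act_add_right X 0 0; simpa using this

lemma act_neg (hds : IsDiffStructure act lie) (X : Xv) (f : C) : act X (-f) = - act X f := by
  have h := hds.act_add_right X f (-f)
  simp only [add_neg_cancel, act_zero hds] at h
  exact eq_neg_of_add_eq_zero_right h.symm

lemma nab_zero_left (hnab : IsLeviCivita act lie ev gf nab) (Y : Xv) : nab 0 Y = 0 := by
  have := hnab.add_left 0 0 Y; simpa using this

lemma nab_zero_right (hnab : IsLeviCivita act lie ev gf nab) (X : Xv) : nab X 0 = 0 := by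
  have := hnab.add_right X 0 0; simpa using this

lemma nab_smulR_left (hnab : IsLeviCivita act lie ev gf nab) (r : ℝ) (X Y : Xv) :
    nab (r • X) Y = r • nab X Y := by
  rw [← smul_one_smul C r X, hnab.smul_left, smul_one_smul]

lemma nab_smulR_right (hds : IsDiffStructure act lie) (hnab : IsLeviCivita act lie ev gf nab)
    (r : ℝ) (X Y : Xv) : nab X (r • Y) = r • nab X Y := by
  rw [← smul_one_smul C r Y, hnab.leibniz, ← Algebra.algebraMap_eq_smul_one, hds.act_const]
  simp [smul_one_smul]

lemma iph_zero_left (hiph : IsThreeFormMap ev iph) (Y : Xv) : iph 0 Y = 0 := by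
  have := hiph.add_left 0 0 Y; simpa using this

lemma iph_zero_right (hiph : IsThreeFormMap ev iph) (X : Xv) : iph X 0 = 0 := by
  have := hiph.add_right X 0 0; simpa using this

lemma iph_smulR_left (hiph : IsThreeFormMap ev iph) (r : ℝ) (X Y : Xv) :
    iph (r • X) Y = r • iph X Y := by
  rw [← smul_one_smul C r X, hiph.smul_left, smul_one_smul]

lemma iph_smulR_right (hiph : IsThreeFormMap ev iph) (r : ℝ) (X Y : Xv) :
    iph X (r • Y) = r • iph X Y := by
  rw [← smul_one_smul C r Y, hiph.smul_right, smul_one_smul]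

lemma iph_antisymm (hev : IsEvStructure ev) (hiph : IsThreeFormMap ev iph) (X Y : Xv) :
    iph X Y = - iph Y X := by
  apply hev.ev_injective
  intro Z
  rw [ev_neg_left hev, hiph.alt12]

/- ### ebp, ebm, decP, decM -/

lemma ebp_add (hg : IsRiemannian ev gf gs) (hb : IsTwoFormMap ev ib) (X Y : Xv) :
    ebp gf ib (X + Y) = ebp gf ib X + ebp gf ib Y := by
  simp only [ebp, hg.add, hb.add, Prod.mk_add_mk, Prod.mk.injEq]
  exact ⟨trivial, by abel⟩

lemma ebm_add (hg : IsRiemannian ev gf gs) (hb : IsTwoFormMap ev ib) (X Y : Xv) :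
    ebm gf ib (X + Y) = ebm gf ib X + ebm gf ib Y := by
  simp only [ebm, hg.add, hb.add, Prod.mk_add_mk, Prod.mk.injEq]
  exact ⟨trivial, by abel⟩

lemma ebp_smul (hg : IsRiemannian ev gf gs) (hb : IsTwoFormMap ev ib) (f : C) (X : Xv) :
    ebp gf ib (f • X) = f • ebp gf ib X := by
  simp only [ebp, hg.smul, hb.smul, Prod.smul_mk, smul_add]

lemma ebm_smul (hg : IsRiemannian ev gf gs) (hb : IsTwoFormMap ev ib) (f : C) (X : Xv) :
    ebm gf ib (f • X) = f • ebm gf ib X := by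
  simp only [ebm, hg.smul, hb.smul, Prod.smul_mk, smul_sub]

lemma ebp_zero (hg : IsRiemannian ev gf gs) (hb : IsTwoFormMap ev ib) :
    ebp gf ib (0 : Xv) = 0 := by
  simp [ebp, gf_zero hg, ib_zero hb]

lemma ebm_zero (hg : IsRiemannian ev gf gs) (hb : IsTwoFormMap ev ib) :
    ebm gf ib (0 : Xv) = 0 := by
  simp [ebm, gf_zero hg, ib_zero hb]

lemma ebp_inj (X Y : Xv) (h : ebp gf ib X = ebp gf ib Y) : X = Y :=
  congrArg Prod.fst h

lemma ebm_inj (X Y : Xv) (h : ebm gf ib X = ebm gf ib Y) : X = Y :=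
  congrArg Prod.fst h

lemma decP_ebp (hg : IsRiemannian ev gf gs) (X : Xv) : decP gs ib (ebp gf ib X) = X := by
  simp only [decP, ebp]
  rw [show ib X + gf X - ib X = gf X by abel, hg.sharp_flat]
  module

lemma decM_ebp (hg : IsRiemannian ev gf gs) (X : Xv) : decM gs ib (ebp gf ib X) = 0 := by
  simp only [decM, ebp]
  rw [show ib X + gf X - ib X = gf X by abel, hg.sharp_flat]
  module

lemma decP_ebm (hg : IsRiemannian ev gf gs) (X : Xv) : decP gs ib (ebm gf ib X) = 0 := by
  simp only [decP, ebm]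
  rw [show ib X - gf X - ib X = -gf X by abel, gs_neg hg, hg.sharp_flat]
  module

lemma decM_ebm (hg : IsRiemannian ev gf gs) (X : Xv) : decM gs ib (ebm gf ib X) = X := by
  simp only [decM, ebm]
  rw [show ib X - gf X - ib X = -gf X by abel, gs_neg hg, hg.sharp_flat]
  module

lemma decP_add (hg : IsRiemannian ev gf gs) (hb : IsTwoFormMap ev ib) (x y : TT Xv Θ) :
    decP gs ib (x + y) = decP gs ib x + decP gs ib y := by
  simp only [decP, Prod.fst_add, Prod.snd_add, hb.add]
  rw [show x.2 + y.2 - (ib x.1 + ib y.1) = (x.2 - ib x.1) + (y.2 - ib y.1) by abel, gs_add hg]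
  module

lemma decM_add (hg : IsRiemannian ev gf gs) (hb : IsTwoFormMap ev ib) (x y : TT Xv Θ) :
    decM gs ib (x + y) = decM gs ib x + decM gs ib y := by
  simp only [decM, Prod.fst_add, Prod.snd_add, hb.add]
  rw [show x.2 + y.2 - (ib x.1 + ib y.1) = (x.2 - ib x.1) + (y.2 - ib y.1) by abel, gs_add hg]
  module

lemma decP_smul (hg : IsRiemannian ev gf gs) (hb : IsTwoFormMap ev ib) (f : C) (x : TT Xv Θ) :
    decP gs ib (f • x) = f • decP gs ib x := by
  simp only [decP, Prod.smul_fst, Prod.smul_snd, hb.smul]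
  rw [← smul_sub, gs_smul hg, ← smul_add, smul_comm]

lemma decM_smul (hg : IsRiemannian ev gf gs) (hb : IsTwoFormMap ev ib) (f : C) (x : TT Xv Θ) :
    decM gs ib (f • x) = f • decM gs ib x := by
  simp only [decM, Prod.smul_fst, Prod.smul_snd, hb.smul]
  rw [← smul_sub, gs_smul hg, ← smul_sub, smul_comm]

lemma decPM (x : TT Xv Θ) : decP gs ib x + decM gs ib x = x.1 := by
  simp only [decP, decM]; module

lemma decomp (hg : IsRiemannian ev gf gs) (hb : IsTwoFormMap ev ib) (x : TT Xv Θ) :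
    ebp gf ib (decP gs ib x) + ebm gf ib (decM gs ib x) = x := by
  have h1 : decP gs ib x + decM gs ib x = x.1 := decPM x
  have h2 : decP gs ib x - decM gs ib x = gs (x.2 - ib x.1) := by
    simp only [decP, decM]; module
  apply Prod.ext
  · simpa [ebp, ebm] using h1
  · show ib _ + gf _ + (ib _ - gf _) = x.2
    rw [show ∀ a b c d : Θ, a + b + (c - d) = (a + c) + (b - d) from fun a b c d => by abel,
      ← hb.add, ← gf_sub hg, h1, h2, hg.flat_sharp]
    abel

/- ### pairing and generalized metric on eigensections -/

lemma pair_add_left (hev : IsEvStructure ev) (x y z : TT Xv Θ) :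
    pairTT ev (x + y) z = pairTT ev x z + pairTT ev y z := by
  simp only [pairTT, Prod.fst_add, Prod.snd_add, hev.add_left, hev.add_right]
  rw [← smul_add]; ring_nf

lemma pair_add_right (hev : IsEvStructure ev) (x y z : TT Xv Θ) :
    pairTT ev x (y + z) = pairTT ev x y + pairTT ev x z := by
  simp only [pairTT, Prod.fst_add, Prod.snd_add, hev.add_left, hev.add_right]
  rw [← smul_add]; ring_nf

lemma Gb_add_left (hev : IsEvStructure ev) (hg : IsRiemannian ev gf gs)
    (hb : IsTwoFormMap ev ib) (x y z : TT Xv Θ) :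
    GbForm ev gf gs ib (x + y) z = GbForm ev gf gs ib x z + GbForm ev gf gs ib y z := by
  simp only [GbForm, Prod.fst_add, Prod.snd_add, hg.add, hb.add, hev.add_left]
  rw [show x.2 + y.2 - (ib x.1 + ib y.1) = (x.2 - ib x.1) + (y.2 - ib y.1) by abel,
    hev.add_left, ← smul_add]
  ring_nf

lemma Gb_add_right (hev : IsEvStructure ev) (hg : IsRiemannian ev gf gs)
    (hb : IsTwoFormMap ev ib) (x y z : TT Xv Θ) :
    GbForm ev gf gs ib x (y + z) = GbForm ev gf gs ib x y + GbForm ev gf gs ib x z := by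
  simp only [GbForm, Prod.fst_add, Prod.snd_add, hg.add, hb.add, hev.add_right]
  rw [show y.2 + z.2 - (ib y.1 + ib z.1) = (y.2 - ib y.1) + (z.2 - ib z.1) by abel,
    gs_add hg, hev.add_right, ← smul_add]
  ring_nf

lemma half_two (c : C) : (2:ℝ)⁻¹ • (c + c) = c := by
  rw [← two_smul ℝ c, smul_smul]; norm_num

lemma pair_pp (hev : IsEvStructure ev) (hg : IsRiemannian ev gf gs)
    (hb : IsTwoFormMap ev ib) (X Y : Xv) :
    pairTT ev (ebp gf ib X) (ebp gf ib Y) = ev (gf X) Y := by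
  simp only [pairTT, ebp, hev.add_left]
  rw [hb.skew Y X, hg.symm Y X]
  rw [show ev (ib X) Y + ev (gf X) Y + (-ev (ib X) Y + ev (gf X) Y)
      = ev (gf X) Y + ev (gf X) Y by ring]
  exact half_two _

lemma pair_pm (hev : IsEvStructure ev) (hg : IsRiemannian ev gf gs)
    (hb : IsTwoFormMap ev ib) (X Y : Xv) :
    pairTT ev (ebp gf ib X) (ebm gf ib Y) = 0 := by
  simp only [pairTT, ebp, ebm, hev.add_left, ev_sub_left hev]
  rw [hb.skew Y X, hg.symm Y X]
  rw [show ev (ib X) Y + ev (gf X) Y + (-ev (ib X) Y - ev (gf X) Y) = 0 by ring, smul_zero]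

lemma pair_mp (hev : IsEvStructure ev) (hg : IsRiemannian ev gf gs)
    (hb : IsTwoFormMap ev ib) (X Y : Xv) :
    pairTT ev (ebm gf ib X) (ebp gf ib Y) = 0 := by
  simp only [pairTT, ebp, ebm, hev.add_left, ev_sub_left hev]
  rw [hb.skew Y X, hg.symm Y X]
  rw [show ev (ib X) Y - ev (gf X) Y + (-ev (ib X) Y + ev (gf X) Y) = 0 by ring, smul_zero]

lemma pair_mm (hev : IsEvStructure ev) (hg : IsRiemannian ev gf gs)
    (hb : IsTwoFormMap ev ib) (X Y : Xv) :
    pairTT ev (ebm gf ib X) (ebm gf ib Y) = - ev (gf X) Y := by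
  simp only [pairTT, ebm, ev_sub_left hev]
  rw [hb.skew Y X, hg.symm Y X]
  rw [show ev (ib X) Y - ev (gf X) Y + (-ev (ib X) Y - ev (gf X) Y)
      = -(ev (gf X) Y + ev (gf X) Y) by ring, smul_neg, half_two]

lemma Gb_pp (hev : IsEvStructure ev) (hg : IsRiemannian ev gf gs)
    (hb : IsTwoFormMap ev ib) (X Y : Xv) :
    GbForm ev gf gs ib (ebp gf ib X) (ebp gf ib Y) = ev (gf X) Y := by
  simp only [GbForm, ebp]
  rw [show ib X + gf X - ib X = gf X by abel, show ib Y + gf Y - ib Y = gf Y by abel,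
    hg.sharp_flat]
  exact half_two _

lemma Gb_pm (hev : IsEvStructure ev) (hg : IsRiemannian ev gf gs)
    (hb : IsTwoFormMap ev ib) (X Y : Xv) :
    GbForm ev gf gs ib (ebp gf ib X) (ebm gf ib Y) = 0 := by
  simp only [GbForm, ebp, ebm]
  rw [show ib X + gf X - ib X = gf X by abel, show ib Y - gf Y - ib Y = -gf Y by abel,
    gs_neg hg, hg.sharp_flat, ev_neg_right hev]
  rw [show ev (gf X) Y + -ev (gf X) Y = 0 by ring, smul_zero]

lemma Gb_mp (hev : IsEvStructure ev) (hg : IsRiemannian ev gf gs)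
    (hb : IsTwoFormMap ev ib) (X Y : Xv) :
    GbForm ev gf gs ib (ebm gf ib X) (ebp gf ib Y) = 0 := by
  simp only [GbForm, ebp, ebm]
  rw [show ib X - gf X - ib X = -gf X by abel, show ib Y + gf Y - ib Y = gf Y by abel,
    hg.sharp_flat, ev_neg_left hev]
  rw [show ev (gf X) Y + -ev (gf X) Y = 0 by ring, smul_zero]

lemma Gb_mm (hev : IsEvStructure ev) (hg : IsRiemannian ev gf gs)
    (hb : IsTwoFormMap ev ib) (X Y : Xv) :
    GbForm ev gf gs ib (ebm gf ib X) (ebm gf ib Y) = ev (gf X) Y := by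
  simp only [GbForm, ebm]
  rw [show ib X - gf X - ib X = -gf X by abel, show ib Y - gf Y - ib Y = -gf Y by abel,
    gs_neg hg, hg.sharp_flat, ev_neg_left hev, ev_neg_right hev, neg_neg]
  exact half_two _

lemma Gb_left_ebp (hev : IsEvStructure ev) (hg : IsRiemannian ev gf gs)
    (hb : IsTwoFormMap ev ib) (Y : Xv) (w : TT Xv Θ) :
    GbForm ev gf gs ib (ebp gf ib Y) w = pairTT ev (ebp gf ib Y) w := by
  simp only [GbForm, pairTT, ebp]
  rw [show ib Y + gf Y - ib Y = gf Y by abel, ev_gf_gs hev hg, ev_sub_left hev,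
    hev.add_left, hb.skew w.1 Y]
  congr 1; ring

lemma Gb_left_ebm (hev : IsEvStructure ev) (hg : IsRiemannian ev gf gs)
    (hb : IsTwoFormMap ev ib) (Y : Xv) (w : TT Xv Θ) :
    GbForm ev gf gs ib (ebm gf ib Y) w = - pairTT ev (ebm gf ib Y) w := by
  simp only [GbForm, pairTT, ebm]
  rw [show ib Y - gf Y - ib Y = -gf Y by abel, ev_neg_left hev, ev_gf_gs hev hg]
  simp only [ev_sub_left hev, hb.skew w.1 Y]
  rw [← smul_neg]
  congr 1; ring

lemma Gb_right_ebm (hev : IsEvStructure ev) (hg : IsRiemannian ev gf gs)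
    (hb : IsTwoFormMap ev ib) (Z : Xv) (w : TT Xv Θ) :
    GbForm ev gf gs ib w (ebm gf ib Z) = - pairTT ev w (ebm gf ib Z) := by
  simp only [GbForm, pairTT, ebm]
  rw [show ib Z - gf Z - ib Z = -gf Z by abel, gs_neg hg, hg.sharp_flat, ev_neg_right hev]
  simp only [ev_sub_left hev, hb.skew Z w.1, hg.symm Z w.1]
  rw [← smul_neg]
  congr 1; ring

/- ### nabP / nabM -/

lemma nabP_add_left (hg : IsRiemannian ev gf gs) (hnab : IsLeviCivita act lie ev gf nab)
    (hiph : IsThreeFormMap ev iph) (X Y Z : Xv) :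
    nabP gs nab iph (X + Y) Z = nabP gs nab iph X Z + nabP gs nab iph Y Z := by
  simp only [nabP, hnab.add_left, hiph.add_left, gs_add hg]; module

lemma nabM_add_left (hg : IsRiemannian ev gf gs) (hnab : IsLeviCivita act lie ev gf nab)
    (hiph : IsThreeFormMap ev iph) (X Y Z : Xv) :
    nabM gs nab iph (X + Y) Z = nabM gs nab iph X Z + nabM gs nab iph Y Z := by
  simp only [nabM, hnab.add_left, hiph.add_left, gs_add hg]; module

lemma nabP_add_right (hg : IsRiemannian ev gf gs) (hnab : IsLeviCivita act lie ev gf nab)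
    (hiph : IsThreeFormMap ev iph) (X Y Z : Xv) :
    nabP gs nab iph X (Y + Z) = nabP gs nab iph X Y + nabP gs nab iph X Z := by
  simp only [nabP, hnab.add_right, hiph.add_right, gs_add hg]; module

lemma nabM_add_right (hg : IsRiemannian ev gf gs) (hnab : IsLeviCivita act lie ev gf nab)
    (hiph : IsThreeFormMap ev iph) (X Y Z : Xv) :
    nabM gs nab iph X (Y + Z) = nabM gs nab iph X Y + nabM gs nab iph X Z := by
  simp only [nabM, hnab.add_right, hiph.add_right, gs_add hg]; module

lemma nabP_smul_left (hg : IsRiemannian ev gf gs) (hnab : IsLeviCivita act lie ev gf nab)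
    (hiph : IsThreeFormMap ev iph) (f : C) (X Y : Xv) :
    nabP gs nab iph (f • X) Y = f • nabP gs nab iph X Y := by
  simp only [nabP, hnab.smul_left, hiph.smul_left, gs_smul hg, smul_add]
  rw [smul_comm ((2:ℝ)⁻¹) f]

lemma nabM_smul_left (hg : IsRiemannian ev gf gs) (hnab : IsLeviCivita act lie ev gf nab)
    (hiph : IsThreeFormMap ev iph) (f : C) (X Y : Xv) :
    nabM gs nab iph (f • X) Y = f • nabM gs nab iph X Y := by
  simp only [nabM, hnab.smul_left, hiph.smul_left, gs_smul hg, smul_sub]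
  rw [smul_comm ((2:ℝ)⁻¹) f]

lemma nabP_leibniz (hg : IsRiemannian ev gf gs) (hnab : IsLeviCivita act lie ev gf nab)
    (hiph : IsThreeFormMap ev iph) (X : Xv) (f : C) (Y : Xv) :
    nabP gs nab iph X (f • Y) = act X f • Y + f • nabP gs nab iph X Y := by
  simp only [nabP, hnab.leibniz, hiph.smul_right, gs_smul hg, smul_add]
  rw [smul_comm ((2:ℝ)⁻¹) f]
  abel

lemma nabM_leibniz (hg : IsRiemannian ev gf gs) (hnab : IsLeviCivita act lie ev gf nab)
    (hiph : IsThreeFormMap ev iph) (X : Xv) (f : C) (Y : Xv) :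
    nabM gs nab iph X (f • Y) = act X f • Y + f • nabM gs nab iph X Y := by
  simp only [nabM, hnab.leibniz, hiph.smul_right, gs_smul hg, smul_sub]
  rw [smul_comm ((2:ℝ)⁻¹) f]
  abel

lemma nabP_zero_right (hg : IsRiemannian ev gf gs) (hnab : IsLeviCivita act lie ev gf nab)
    (hiph : IsThreeFormMap ev iph) (X : Xv) : nabP gs nab iph X 0 = 0 := by
  simp [nabP, nab_zero_right hnab, iph_zero_right hiph, gs_zero hg]

lemma nabM_zero_right (hg : IsRiemannian ev gf gs) (hnab : IsLeviCivita act lie ev gf nab)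
    (hiph : IsThreeFormMap ev iph) (X : Xv) : nabM gs nab iph X 0 = 0 := by
  simp [nabM, nab_zero_right hnab, iph_zero_right hiph, gs_zero hg]

lemma nabP_zero_left (hg : IsRiemannian ev gf gs) (hnab : IsLeviCivita act lie ev gf nab)
    (hiph : IsThreeFormMap ev iph) (Y : Xv) : nabP gs nab iph 0 Y = 0 := by
  simp [nabP, nab_zero_left hnab, iph_zero_left hiph, gs_zero hg]

lemma nabM_zero_left (hg : IsRiemannian ev gf gs) (hnab : IsLeviCivita act lie ev gf nab)
    (hiph : IsThreeFormMap ev iph) (Y : Xv) : nabM gs nab iph 0 Y = 0 := by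
  simp [nabM, nab_zero_left hnab, iph_zero_left hiph, gs_zero hg]

/-- metric compatibility of `∇^{+φ}` (the φ-terms cancel by `alt23`). -/
lemma nabP_metric (hev : IsEvStructure ev) (hg : IsRiemannian ev gf gs)
    (hnab : IsLeviCivita act lie ev gf nab) (hiph : IsThreeFormMap ev iph) (X Y Z : Xv) :
    ev (gf (nabP gs nab iph X Y)) Z + ev (gf Y) (nabP gs nab iph X Z)
      = act X (ev (gf Y) Z) := by
  have hm := hnab.metric X Y Z
  simp only [gsc] at hm
  simp only [nabP, hg.add, hev.add_left, hev.add_right, gf_smulR hg, gs_smulR hg,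
    ev_smulR_left hev]
  rw [hg.flat_sharp]
  rw [show ev (gf Y) ((2:ℝ)⁻¹ • gs (iph X Z)) = (2:ℝ)⁻¹ • ev (gf Y) (gs (iph X Z)) by
    rw [← smul_one_smul C ((2:ℝ)⁻¹) (gs (iph X Z)), hev.smul_right, smul_one_mul]]
  rw [ev_gf_gs hev hg, hiph.alt23 X Z Y, hm]
  module

lemma nabM_metric (hev : IsEvStructure ev) (hg : IsRiemannian ev gf gs)
    (hnab : IsLeviCivita act lie ev gf nab) (hiph : IsThreeFormMap ev iph) (X Y Z : Xv) :
    ev (gf (nabM gs nab iph X Y)) Z + ev (gf Y) (nabM gs nab iph X Z)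
      = act X (ev (gf Y) Z) := by
  have hm := hnab.metric X Y Z
  simp only [gsc] at hm
  simp only [nabM, gf_sub hg, ev_sub_left hev, ev_sub_right hev, gf_smulR hg, gs_smulR hg,
    ev_smulR_left hev]
  rw [hg.flat_sharp]
  rw [show ev (gf Y) ((2:ℝ)⁻¹ • gs (iph X Z)) = (2:ℝ)⁻¹ • ev (gf Y) (gs (iph X Z)) by
    rw [← smul_one_smul C ((2:ℝ)⁻¹) (gs (iph X Z)), hev.smul_right, smul_one_mul]]
  rw [ev_gf_gs hev hg, hiph.alt23 X Z Y, hm]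
  module

/- ### Dphib on eigensections -/

lemma Dphib_pp (hg : IsRiemannian ev gf gs) (hb : IsTwoFormMap ev ib)
    (hnab : IsLeviCivita act lie ev gf nab) (hiph : IsThreeFormMap ev iph) (X Y : Xv) :
    Dphib gf gs ib nab iph (ebp gf ib X) (ebp gf ib Y) = ebp gf ib (nab X Y) := by
  simp [Dphib, decP_ebp hg, decM_ebp hg, nab_zero_left hnab, nab_zero_right hnab,
    nabP_zero_left hg hnab hiph, nabM_zero_right hg hnab hiph, ebp_zero hg hb, ebm_zero hg hb]

lemma Dphib_mm (hg : IsRiemannian ev gf gs) (hb : IsTwoFormMap ev ib)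
    (hnab : IsLeviCivita act lie ev gf nab) (hiph : IsThreeFormMap ev iph) (X Y : Xv) :
    Dphib gf gs ib nab iph (ebm gf ib X) (ebm gf ib Y) = ebm gf ib (nab X Y) := by
  simp [Dphib, decP_ebm hg, decM_ebm hg, nab_zero_left hnab, nab_zero_right hnab,
    nabP_zero_right hg hnab hiph, nabM_zero_left hg hnab hiph, ebp_zero hg hb, ebm_zero hg hb]

lemma Dphib_mp (hg : IsRiemannian ev gf gs) (hb : IsTwoFormMap ev ib)
    (hnab : IsLeviCivita act lie ev gf nab) (hiph : IsThreeFormMap ev iph) (X Y : Xv) :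
    Dphib gf gs ib nab iph (ebm gf ib X) (ebp gf ib Y) = ebp gf ib (nabP gs nab iph X Y) := by
  simp [Dphib, decP_ebm hg, decM_ebm hg, decP_ebp hg, decM_ebp hg, nab_zero_left hnab,
    nab_zero_right hnab, nabM_zero_left hg hnab hiph, nabM_zero_right hg hnab hiph,
    ebp_zero hg hb, ebm_zero hg hb]

lemma Dphib_pm (hg : IsRiemannian ev gf gs) (hb : IsTwoFormMap ev ib)
    (hnab : IsLeviCivita act lie ev gf nab) (hiph : IsThreeFormMap ev iph) (X Y : Xv) :
    Dphib gf gs ib nab iph (ebp gf ib X) (ebm gf ib Y) = ebm gf ib (nabM gs nab iph X Y) := by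
  simp [Dphib, decP_ebm hg, decM_ebm hg, decP_ebp hg, decM_ebp hg, nab_zero_left hnab,
    nab_zero_right hnab, nabP_zero_left hg hnab hiph, nabP_zero_right hg hnab hiph,
    ebp_zero hg hb, ebm_zero hg hb]

lemma Dphib_x_ebp (hg : IsRiemannian ev gf gs) (hb : IsTwoFormMap ev ib)
    (hnab : IsLeviCivita act lie ev gf nab) (hiph : IsThreeFormMap ev iph)
    (x : TT Xv Θ) (Y : Xv) :
    Dphib gf gs ib nab iph x (ebp gf ib Y)
      = ebp gf ib (nab (decP gs ib x) Y + nabP gs nab iph (decM gs ib x) Y) := by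
  simp [Dphib, decP_ebp hg, decM_ebp hg, nab_zero_right hnab,
    nabM_zero_right hg hnab hiph, ebm_zero hg hb, ebp_add hg hb]

lemma Dphib_x_ebm (hg : IsRiemannian ev gf gs) (hb : IsTwoFormMap ev ib)
    (hnab : IsLeviCivita act lie ev gf nab) (hiph : IsThreeFormMap ev iph)
    (x : TT Xv Θ) (Y : Xv) :
    Dphib gf gs ib nab iph x (ebm gf ib Y)
      = ebm gf ib (nabM gs nab iph (decP gs ib x) Y + nab (decM gs ib x) Y) := by
  simp [Dphib, decP_ebm hg, decM_ebm hg, nab_zero_right hnab,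
    nabP_zero_right hg hnab hiph, ebp_zero hg hb, ebm_add hg hb]

/- ### Dphib is a generalized connection -/

lemma Dphib_genconn (hds : IsDiffStructure act lie) (hg : IsRiemannian ev gf gs)
    (hb : IsTwoFormMap ev ib) (hnab : IsLeviCivita act lie ev gf nab)
    (hiph : IsThreeFormMap ev iph) :
    IsGenConn act (Dphib gf gs ib nab iph) := by
  constructor
  · intro x y z
    simp only [Dphib, decP_add hg hb, decM_add hg hb, hnab.add_left,
      nabP_add_left hg hnab hiph, nabM_add_left hg hnab hiph, ebp_add hg hb, ebm_add hg hb]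
    abel
  · intro f x y
    simp only [Dphib, decP_smul hg hb, decM_smul hg hb, hnab.smul_left,
      nabP_smul_left hg hnab hiph, nabM_smul_left hg hnab hiph, ebp_smul hg hb,
      ebm_smul hg hb, ← smul_add]
  · intro x y z
    simp only [Dphib, decP_add hg hb, decM_add hg hb, hnab.add_right,
      nabP_add_right hg hnab hiph, nabM_add_right hg hnab hiph, ebp_add hg hb, ebm_add hg hb]
    abel
  · intro x f y
    have h1 : decP gs ib (f • y) = f • decP gs ib y := decP_smul hg hb f y
    have h2 : decM gs ib (f • y) = f • decM gs ib y := decM_smul hg hb f y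
    simp only [Dphib, h1, h2, hnab.leibniz, nabP_leibniz hg hnab hiph,
      nabM_leibniz hg hnab hiph, ebp_add hg hb, ebm_add hg hb, ebp_smul hg hb, ebm_smul hg hb]
    rw [show ∀ a b c d a' b' c' d' : TT Xv Θ,
        (a + a') + (b + b') + (c + c') + (d + d') = (a + b + c + d) + (a' + b' + c' + d')
        from fun a b c d a' b' c' d' => by abel]
    congr 1
    · rw [show ∀ (a b : C) (u v : TT Xv Θ), a•u + a•v + b•u + b•v = a•(u+v) + b•(u+v)
        from fun a b u v => by rw [smul_add, smul_add]; abel]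
      rw [decomp hg hb y, ← add_smul, ← hds.act_add_left, decPM]
    · simp only [← smul_add]

/- ### Dphib is torsion free -/

lemma Dphib_fst (hnab : IsLeviCivita act lie ev gf nab) (x y : TT Xv Θ) :
    (Dphib gf gs ib nab iph x y).1
      = nab x.1 y.1 + (2:ℝ)⁻¹ • gs (iph (decM gs ib x) (decP gs ib y))
        - (2:ℝ)⁻¹ • gs (iph (decP gs ib x) (decM gs ib y)) := by
  conv_rhs => rw [← decPM (gs := gs) (ib := ib) x, ← decPM (gs := gs) (ib := ib) y]
  simp only [Dphib, Prod.fst_add, ebp, ebm, nabP, nabM, hnab.add_left, hnab.add_right]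
  abel

lemma Dphib_torsionfree (hev : IsEvStructure ev) (hg : IsRiemannian ev gf gs)
    (hnab : IsLeviCivita act lie ev gf nab) (hiph : IsThreeFormMap ev iph) :
    TorsionFree lie (Dphib gf gs ib nab iph) := by
  intro x y
  show (Dphib gf gs ib nab iph x y - Dphib gf gs ib nab iph y x).1 = lie x.1 y.1
  rw [Prod.fst_sub, Dphib_fst hnab, Dphib_fst hnab,
    iph_antisymm hev hiph (decM gs ib y) (decP gs ib x),
    iph_antisymm hev hiph (decP gs ib y) (decM gs ib x), gs_neg hg, gs_neg hg,
    ← hnab.torsion_free]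
  module

/- ### Dphib is a G^b-metric connection -/

lemma metpp (hds : IsDiffStructure act lie) (hev : IsEvStructure ev)
    (hg : IsRiemannian ev gf gs) (hnab : IsLeviCivita act lie ev gf nab)
    (hiph : IsThreeFormMap ev iph) (x : TT Xv Θ) (Y Z : Xv) :
    act x.1 (ev (gf Y) Z)
      = ev (gf (nab (decP gs ib x) Y + nabP gs nab iph (decM gs ib x) Y)) Z
        + ev (gf Y) (nab (decP gs ib x) Z + nabP gs nab iph (decM gs ib x) Z) := by
  rw [hg.add, hev.add_left, hev.add_right]
  have e1 := hnab.metric (decP gs ib x) Y Z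
  simp only [gsc] at e1
  have e2 := nabP_metric hev hg hnab hiph (decM gs ib x) Y Z
  rw [← decPM (gs := gs) (ib := ib) x, hds.act_add_left, e1, ← e2]
  ring

lemma metmm (hds : IsDiffStructure act lie) (hev : IsEvStructure ev)
    (hg : IsRiemannian ev gf gs) (hnab : IsLeviCivita act lie ev gf nab)
    (hiph : IsThreeFormMap ev iph) (x : TT Xv Θ) (Y Z : Xv) :
    act x.1 (ev (gf Y) Z)
      = ev (gf (nabM gs nab iph (decP gs ib x) Y + nab (decM gs ib x) Y)) Z
        + ev (gf Y) (nabM gs nab iph (decP gs ib x) Z + nab (decM gs ib x) Z) := by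
  rw [hg.add, hev.add_left, hev.add_right]
  have e1 := nabM_metric hev hg hnab hiph (decP gs ib x) Y Z
  have e2 := hnab.metric (decM gs ib x) Y Z
  simp only [gsc] at e2
  rw [← decPM (gs := gs) (ib := ib) x, hds.act_add_left, e2, ← e1]
  ring

lemma Dphib_metricconn (hds : IsDiffStructure act lie) (hev : IsEvStructure ev)
    (hg : IsRiemannian ev gf gs) (hb : IsTwoFormMap ev ib)
    (hnab : IsLeviCivita act lie ev gf nab) (hiph : IsThreeFormMap ev iph) :
    IsMetricConn act ev gf gs ib (Dphib gf gs ib nab iph) := by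
  have hadd : ∀ x u v, Dphib gf gs ib nab iph x (u + v)
      = Dphib gf gs ib nab iph x u + Dphib gf gs ib nab iph x v :=
    (Dphib_genconn hds hg hb hnab hiph).add_right
  constructor
  · intro x y z
    obtain ⟨Y1, Y2, hy⟩ : ∃ A B, y = ebp gf ib A + ebm gf ib B :=
      ⟨_, _, (decomp hg hb y).symm⟩
    obtain ⟨Z1, Z2, hz⟩ : ∃ A B, z = ebp gf ib A + ebm gf ib B :=
      ⟨_, _, (decomp hg hb z).symm⟩
    subst hy hz
    simp only [hadd, pair_add_left hev, pair_add_right hev,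
      Dphib_x_ebp hg hb hnab hiph, Dphib_x_ebm hg hb hnab hiph,
      pair_pp hev hg hb, pair_pm hev hg hb, pair_mp hev hg hb, pair_mm hev hg hb,
      add_zero, zero_add, hds.act_add_right, act_neg hds]
    rw [metpp hds hev hg hnab hiph x Y1 Z1, metmm hds hev hg hnab hiph x Y2 Z2]
    ring
  · intro x y z
    obtain ⟨Y1, Y2, hy⟩ : ∃ A B, y = ebp gf ib A + ebm gf ib B :=
      ⟨_, _, (decomp hg hb y).symm⟩
    obtain ⟨Z1, Z2, hz⟩ : ∃ A B, z = ebp gf ib A + ebm gf ib B :=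
      ⟨_, _, (decomp hg hb z).symm⟩
    subst hy hz
    simp only [hadd, Gb_add_left hev hg hb, Gb_add_right hev hg hb,
      Dphib_x_ebp hg hb hnab hiph, Dphib_x_ebm hg hb hnab hiph,
      Gb_pp hev hg hb, Gb_pm hev hg hb, Gb_mp hev hg hb, Gb_mm hev hg hb,
      add_zero, zero_add, hds.act_add_right]
    rw [metpp hds hev hg hnab hiph x Y1 Z1, metmm hds hev hg hnab hiph x Y2 Z2]
    ring

/- ### the formula in the splitting 𝕋M = TM ⊕ T*M -/

lemma iph_neg_left (hiph : IsThreeFormMap ev iph) (X Y : Xv) : iph (-X) Y = - iph X Y := by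
  rw [← neg_one_smul ℝ X, iph_smulR_left hiph, neg_one_smul]

lemma iph_neg_right (hiph : IsThreeFormMap ev iph) (X Y : Xv) : iph X (-Y) = - iph X Y := by
  rw [← neg_one_smul ℝ Y, iph_smulR_right hiph, neg_one_smul]

lemma iph_sub_left (hiph : IsThreeFormMap ev iph) (X Y Z : Xv) :
    iph (X - Y) Z = iph X Z - iph Y Z := by
  rw [sub_eq_add_neg, hiph.add_left, iph_neg_left hiph, sub_eq_add_neg]

lemma iph_sub_right (hiph : IsThreeFormMap ev iph) (X Y Z : Xv) :
    iph X (Y - Z) = iph X Y - iph X Z := by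
  rw [sub_eq_add_neg, hiph.add_right, iph_neg_right hiph, sub_eq_add_neg]

lemma nab_neg_right (hds : IsDiffStructure act lie) (hnab : IsLeviCivita act lie ev gf nab)
    (X Y : Xv) : nab X (-Y) = - nab X Y := by
  rw [← neg_one_smul ℝ Y, nab_smulR_right hds hnab, neg_one_smul]

lemma nab_sub_right (hds : IsDiffStructure act lie) (hnab : IsLeviCivita act lie ev gf nab)
    (X Y Z : Xv) : nab X (Y - Z) = nab X Y - nab X Z := by
  rw [sub_eq_add_neg, hnab.add_right, nab_neg_right hds hnab, sub_eq_add_neg]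

/-- `gf(∇_X (g⁻¹η)) = ∇_X η` for the Levi-Civita connection. -/
lemma gf_nab_gs (hev : IsEvStructure ev) (hg : IsRiemannian ev gf gs)
    (hnab : IsLeviCivita act lie ev gf nab) {nabT : Xv → Θ → Θ}
    (hnabT : IsNabTheta act ev nab nabT) (X : Xv) (η : Θ) :
    gf (nab X (gs η)) = nabT X η := by
  apply hev.ev_injective
  intro Z
  rw [hnabT.formula]
  have hm := hnab.metric X (gs η) Z
  simp only [gsc, hg.flat_sharp] at hm
  linear_combination -hm

lemma Dphib_quad (hds : IsDiffStructure act lie) (hev : IsEvStructure ev)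
    (hg : IsRiemannian ev gf gs) (hb : IsTwoFormMap ev ib)
    (hnab : IsLeviCivita act lie ev gf nab) (hiph : IsThreeFormMap ev iph)
    {nabT : Xv → Θ → Θ} (hnabT : IsNabTheta act ev nab nabT)
    (P M Q N X Y : Xv) (ξ η : Θ)
    (hPM : P + M = X) (hPMd : P - M = gs ξ) (hQN : Q + N = Y) (hQNd : Q - N = gs η) :
    ebp gf ib (nab P Q) + ebm gf ib (nabM gs nab iph P N)
      + ebp gf ib (nabP gs nab iph M Q) + ebm gf ib (nab M N)
      = ebMap ib (nab X Y + (4:ℝ)⁻¹ • gs (iph X (gs η) - iph (gs ξ) Y),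
          nabT X η + (4:ℝ)⁻¹ • (iph X Y - iph (gs ξ) (gs η))) := by
  have h4 : nab X Y = nab P Q + nab P N + (nab M Q + nab M N) := by
    rw [← hPM, ← hQN, hnab.add_left, hnab.add_right, hnab.add_right]
  have hd1 : iph X (gs η) - iph (gs ξ) Y = (2:ℝ) • (iph M Q - iph P N) := by
    rw [← hPM, ← hQNd, ← hPMd, ← hQN]
    simp only [hiph.add_left, hiph.add_right, iph_sub_left hiph, iph_sub_right hiph]
    module
  have hd2 : iph X Y - iph (gs ξ) (gs η) = (2:ℝ) • (iph P N + iph M Q) := by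
    rw [← hPM, ← hQN, ← hPMd, ← hQNd]
    simp only [hiph.add_left, hiph.add_right, iph_sub_left hiph, iph_sub_right hiph]
    module
  have hfst : nab P Q + nabM gs nab iph P N + nabP gs nab iph M Q + nab M N
      = nab X Y + (4:ℝ)⁻¹ • gs (iph X (gs η) - iph (gs ξ) Y) := by
    rw [hd1, gs_smulR hg, gs_sub hg, h4]
    simp only [nabM, nabP, gs_sub hg]
    module
  have hnabXgs : nab X (gs η) = nab P Q - nab P N + (nab M Q - nab M N) := by
    rw [← hPM, ← hQNd, hnab.add_left, nab_sub_right hds hnab, nab_sub_right hds hnab]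
  have hW : gf (nab P Q) - gf (nabM gs nab iph P N) + gf (nabP gs nab iph M Q)
      - gf (nab M N)
      = nabT X η + (4:ℝ)⁻¹ • (iph X Y - iph (gs ξ) (gs η)) := by
    have e := congrArg gf hnabXgs
    rw [hg.add, gf_sub hg, gf_sub hg, gf_nab_gs hev hg hnab hnabT] at e
    rw [hd2]
    simp only [nabM, nabP, gf_sub hg, hg.add, gf_smulR hg, hg.flat_sharp]
    rw [show (nabT X η : Θ) = gf (nab P Q) - gf (nab P N) + (gf (nab M Q) - gf (nab M N))
      from e]
    module
  apply Prod.ext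
  · simpa [ebp, ebm, ebMap] using hfst
  · show ib (nab P Q) + gf (nab P Q) + (ib (nabM gs nab iph P N) - gf (nabM gs nab iph P N))
        + (ib (nabP gs nab iph M Q) + gf (nabP gs nab iph M Q))
        + (ib (nab M N) - gf (nab M N))
      = nabT X η + (4:ℝ)⁻¹ • (iph X Y - iph (gs ξ) (gs η))
        + ib (nab X Y + (4:ℝ)⁻¹ • gs (iph X (gs η) - iph (gs ξ) Y))
    rw [← hfst, ← hW, hb.add, hb.add, hb.add]
    abel

lemma Dphib_ebMap (hds : IsDiffStructure act lie) (hev : IsEvStructure ev)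
    (hg : IsRiemannian ev gf gs) (hb : IsTwoFormMap ev ib)
    (hnab : IsLeviCivita act lie ev gf nab) (hiph : IsThreeFormMap ev iph)
    {nabT : Xv → Θ → Θ} (hnabT : IsNabTheta act ev nab nabT) (X Y : Xv) (ξ η : Θ) :
    Dphib gf gs ib nab iph (ebMap ib (X, ξ)) (ebMap ib (Y, η))
      = ebMap ib (nab X Y + (4:ℝ)⁻¹ • gs (iph X (gs η) - iph (gs ξ) Y),
          nabT X η + (4:ℝ)⁻¹ • (iph X Y - iph (gs ξ) (gs η))) := by
  have hP : decP gs ib (ebMap ib (X, ξ)) = (2:ℝ)⁻¹ • (X + gs ξ) := by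
    simp only [decP, ebMap]
    rw [show ξ + ib X - ib X = ξ by abel]
  have hM : decM gs ib (ebMap ib (X, ξ)) = (2:ℝ)⁻¹ • (X - gs ξ) := by
    simp only [decM, ebMap]
    rw [show ξ + ib X - ib X = ξ by abel]
  have hQ : decP gs ib (ebMap ib (Y, η)) = (2:ℝ)⁻¹ • (Y + gs η) := by
    simp only [decP, ebMap]
    rw [show η + ib Y - ib Y = η by abel]
  have hN : decM gs ib (ebMap ib (Y, η)) = (2:ℝ)⁻¹ • (Y - gs η) := by
    simp only [decM, ebMap]
    rw [show η + ib Y - ib Y = η by abel]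
  show ebp gf ib _ + ebm gf ib _ + ebp gf ib _ + ebm gf ib _ = _
  rw [hP, hM, hQ, hN]
  exact Dphib_quad hds hev hg hb hnab hiph hnabT _ _ _ _ X Y ξ η
    (by module) (by module) (by module) (by module)

/- ### the converse: classification of torsion-free metric connections -/

lemma half_cancel {a b : C} (h1 : a + b = 0) (h2 : -a + b = 0) : a = 0 ∧ b = 0 := by
  have ha : a + a = 0 := by linear_combination h1 - h2
  have hb : b + b = 0 := by linear_combination h1 + h2
  constructor
  · calc a = (2:ℝ)⁻¹ • (a + a) := (half_two a).symm
    _ = 0 := by rw [ha, smul_zero]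
  · calc b = (2:ℝ)⁻¹ • (b + b) := (half_two b).symm
    _ = 0 := by rw [hb, smul_zero]

theorem converse_part (hds : IsDiffStructure act lie) (hev : IsEvStructure ev)
    (hg : IsRiemannian ev gf gs) (hb : IsTwoFormMap ev ib)
    (hnab : IsLeviCivita act lie ev gf nab)
    (D : TT Xv Θ → TT Xv Θ → TT Xv Θ)
    (hconn : IsGenConn act D) (htf : TorsionFree lie D)
    (hmet : IsMetricConn act ev gf gs ib D) :
    ∃ iph : Xv → Xv → Θ,
      (IsThreeFormMap ev iph ∧ D = Dphib gf gs ib nab iph ∧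
        (∀ X Y Z : Xv,
          ev (iph X Y) Z
            = (2:ℝ) • gsc ev gf ((D (ebm gf ib X) (ebp gf ib Y)).1 - nab X Y) Z)) ∧
      (∀ iph' : Xv → Xv → Θ,
        IsThreeFormMap ev iph' → D = Dphib gf gs ib nab iph' → iph' = iph) := by
  -- orthogonality of the eigenbundles is preserved
  have keyA : ∀ (x : TT Xv Θ) (Y Z : Xv),
      pairTT ev (D x (ebp gf ib Y)) (ebm gf ib Z) = 0 ∧
      pairTT ev (ebp gf ib Y) (D x (ebm gf ib Z)) = 0 := by
    intro x Y Z
    have e1 := hmet.1 x (ebp gf ib Y) (ebm gf ib Z)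
    have e2 := hmet.2 x (ebp gf ib Y) (ebm gf ib Z)
    rw [pair_pm hev hg hb, act_zero hds] at e1
    rw [Gb_pm hev hg hb, act_zero hds, Gb_right_ebm hev hg hb, Gb_left_ebp hev hg hb] at e2
    exact half_cancel e1.symm (by linear_combination -e2)
  -- D preserves C₊ and C₋
  have presP : ∀ (x : TT Xv Θ) (Y : Xv),
      D x (ebp gf ib Y) = ebp gf ib (decP gs ib (D x (ebp gf ib Y))) := by
    intro x Y
    have hd := decomp hg hb (D x (ebp gf ib Y))
    have hz : decM gs ib (D x (ebp gf ib Y)) = 0 := by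
      apply g_nondeg hev hg
      intro Z
      have h := (keyA x Y Z).1
      rw [← hd, pair_add_left hev, pair_pm hev hg hb, pair_mm hev hg hb] at h
      linear_combination -h
    conv_lhs => rw [← hd]
    rw [hz, ebm_zero hg hb, add_zero]
  have presM : ∀ (x : TT Xv Θ) (Z : Xv),
      D x (ebm gf ib Z) = ebm gf ib (decM gs ib (D x (ebm gf ib Z))) := by
    intro x Z
    have hd := decomp hg hb (D x (ebm gf ib Z))
    have hz : decP gs ib (D x (ebm gf ib Z)) = 0 := by
      apply g_nondeg hev hg
      intro Y
      have h := (keyA x Y Z).2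
      rw [← hd, pair_add_right hev, pair_pp hev hg hb, pair_pm hev hg hb] at h
      rw [← hg.symm]
      linear_combination h
    conv_lhs => rw [← hd]
    rw [hz, ebp_zero hg hb, zero_add]
  -- metric identities for the four component operators
  have metP : ∀ (x : TT Xv Θ) (Y Z : Xv),
      act x.1 (ev (gf Y) Z)
        = ev (gf (decP gs ib (D x (ebp gf ib Y)))) Z
          + ev (gf Y) (decP gs ib (D x (ebp gf ib Z))) := by
    intro x Y Z
    have e := hmet.1 x (ebp gf ib Y) (ebp gf ib Z)
    rw [pair_pp hev hg hb, presP x Y, presP x Z, pair_pp hev hg hb, pair_pp hev hg hb] at e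
    exact e
  have metM : ∀ (x : TT Xv Θ) (Y Z : Xv),
      act x.1 (ev (gf Y) Z)
        = ev (gf (decM gs ib (D x (ebm gf ib Y)))) Z
          + ev (gf Y) (decM gs ib (D x (ebm gf ib Z))) := by
    intro x Y Z
    have e := hmet.1 x (ebm gf ib Y) (ebm gf ib Z)
    rw [pair_mm hev hg hb, presM x Y, presM x Z, pair_mm hev hg hb, pair_mm hev hg hb,
      act_neg hds] at e
    linear_combination -e
  -- torsion identities
  have tor : ∀ x y : TT Xv Θ, (D x y).1 - (D y x).1 = lie x.1 y.1 := by
    intro x y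
    have := htf x y
    rwa [diamond, Prod.fst_sub] at this
  -- the `++` operator is the Levi-Civita connection
  have hn1 : ∀ A Y : Xv, decP gs ib (D (ebp gf ib A) (ebp gf ib Y)) = nab A Y := by
    have hFsym : ∀ A B : Xv,
        decP gs ib (D (ebp gf ib A) (ebp gf ib B)) - nab A B
          = decP gs ib (D (ebp gf ib B) (ebp gf ib A)) - nab B A := by
      intro A B
      have t := tor (ebp gf ib A) (ebp gf ib B)
      rw [presP (ebp gf ib A) B, presP (ebp gf ib B) A] at t
      have t' : decP gs ib (D (ebp gf ib A) (ebp gf ib B))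
          - decP gs ib (D (ebp gf ib B) (ebp gf ib A)) = lie A B := t
      have n' := hnab.torsion_free A B
      rw [← n'] at t'
      linear_combination (norm := abel) t'
    have hFskew : ∀ A B Z : Xv,
        ev (gf (decP gs ib (D (ebp gf ib A) (ebp gf ib B)) - nab A B)) Z
          = - ev (gf (decP gs ib (D (ebp gf ib A) (ebp gf ib Z)) - nab A Z)) B := by
      intro A B Z
      have e1 := metP (ebp gf ib A) B Z
      have e2 := hnab.metric A B Z
      simp only [gsc] at e2
      have e3 : ev (gf (decP gs ib (D (ebp gf ib A) (ebp gf ib B)))) Z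
          + ev (gf B) (decP gs ib (D (ebp gf ib A) (ebp gf ib Z)))
          = ev (gf (nab A B)) Z + ev (gf B) (nab A Z) := by
        rw [← e1, ← e2]; rfl
      rw [gf_sub hg, ev_sub_left hev, gf_sub hg, ev_sub_left hev,
        hg.symm _ B, hg.symm (nab A Z) B]
      linear_combination e3
    intro A Y
    have key : ∀ Z, ev (gf (decP gs ib (D (ebp gf ib A) (ebp gf ib Y)) - nab A Y)) Z = 0 := by
      intro Z
      set F : Xv → Xv → Xv → C := fun A B Z =>
        ev (gf (decP gs ib (D (ebp gf ib A) (ebp gf ib B)) - nab A B)) Z with hF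
      have sym : ∀ A B Z, F A B Z = F B A Z := by
        intro A B Z; simp only [hF]; rw [hFsym A B]
      have skew : ∀ A B Z, F A B Z = - F A Z B := by
        intro A B Z; simp only [hF]; rw [hFskew A B Z, hg.symm]
      have h2 : F A Y Z = - F A Y Z := by
        calc F A Y Z = - F A Z Y := skew A Y Z
        _ = - F Z A Y := by rw [sym A Z Y]
        _ = F Z Y A := by rw [skew Z A Y, neg_neg]
        _ = F Y Z A := by rw [sym Z Y A]
        _ = - F Y A Z := by rw [skew Y Z A]
        _ = - F A Y Z := by rw [sym Y A Z]
      have h3 : F A Y Z + F A Y Z = 0 := by linear_combination h2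
      have := half_two (F A Y Z)
      rw [h3, smul_zero] at this
      exact this.symm
    have h0 := g_nondeg hev hg _ key
    linear_combination (norm := abel) h0
  -- the `--` operator is the Levi-Civita connection
  have hn4 : ∀ A Y : Xv, decM gs ib (D (ebm gf ib A) (ebm gf ib Y)) = nab A Y := by
    have hFsym : ∀ A B : Xv,
        decM gs ib (D (ebm gf ib A) (ebm gf ib B)) - nab A B
          = decM gs ib (D (ebm gf ib B) (ebm gf ib A)) - nab B A := by
      intro A B
      have t := tor (ebm gf ib A) (ebm gf ib B)
      rw [presM (ebm gf ib A) B, presM (ebm gf ib B) A] at t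
      have t' : decM gs ib (D (ebm gf ib A) (ebm gf ib B))
          - decM gs ib (D (ebm gf ib B) (ebm gf ib A)) = lie A B := t
      have n' := hnab.torsion_free A B
      rw [← n'] at t'
      linear_combination (norm := abel) t'
    have hFskew : ∀ A B Z : Xv,
        ev (gf (decM gs ib (D (ebm gf ib A) (ebm gf ib B)) - nab A B)) Z
          = - ev (gf (decM gs ib (D (ebm gf ib A) (ebm gf ib Z)) - nab A Z)) B := by
      intro A B Z
      have e1 := metM (ebm gf ib A) B Z
      have e2 := hnab.metric A B Z
      simp only [gsc] at e2
      have e3 : ev (gf (decM gs ib (D (ebm gf ib A) (ebm gf ib B)))) Z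
          + ev (gf B) (decM gs ib (D (ebm gf ib A) (ebm gf ib Z)))
          = ev (gf (nab A B)) Z + ev (gf B) (nab A Z) := by
        rw [← e1, ← e2]; rfl
      rw [gf_sub hg, ev_sub_left hev, gf_sub hg, ev_sub_left hev,
        hg.symm _ B, hg.symm (nab A Z) B]
      linear_combination e3
    intro A Y
    have key : ∀ Z, ev (gf (decM gs ib (D (ebm gf ib A) (ebm gf ib Y)) - nab A Y)) Z = 0 := by
      intro Z
      set F : Xv → Xv → Xv → C := fun A B Z =>
        ev (gf (decM gs ib (D (ebm gf ib A) (ebm gf ib B)) - nab A B)) Z with hF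
      have sym : ∀ A B Z, F A B Z = F B A Z := by
        intro A B Z; simp only [hF]; rw [hFsym A B]
      have skew : ∀ A B Z, F A B Z = - F A Z B := by
        intro A B Z; simp only [hF]; rw [hFskew A B Z, hg.symm]
      have h2 : F A Y Z = - F A Y Z := by
        calc F A Y Z = - F A Z Y := skew A Y Z
        _ = - F Z A Y := by rw [sym A Z Y]
        _ = F Z Y A := by rw [skew Z A Y, neg_neg]
        _ = F Y Z A := by rw [sym Z Y A]
        _ = - F Y A Z := by rw [skew Y Z A]
        _ = - F A Y Z := by rw [sym Y A Z]
      have h3 : F A Y Z + F A Y Z = 0 := by linear_combination h2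
      have := half_two (F A Y Z)
      rw [h3, smul_zero] at this
      exact this.symm
    have h0 := g_nondeg hev hg _ key
    linear_combination (norm := abel) h0
  -- the torsion operator S of the mixed components
  set S : Xv → Xv → Xv := fun A Y =>
    decP gs ib (D (ebm gf ib A) (ebp gf ib Y)) - nab A Y with hSdef
  have hS : ∀ A Y, decP gs ib (D (ebm gf ib A) (ebp gf ib Y)) = nab A Y + S A Y := by
    intro A Y; simp only [hSdef]; abel
  have hT : ∀ A Y : Xv,
      decM gs ib (D (ebp gf ib A) (ebm gf ib Y)) = nab A Y + S Y A := by
    intro A Y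
    have t := tor (ebm gf ib Y) (ebp gf ib A)
    rw [presP (ebm gf ib Y) A, presM (ebp gf ib A) Y] at t
    have t' : decP gs ib (D (ebm gf ib Y) (ebp gf ib A))
        - decM gs ib (D (ebp gf ib A) (ebm gf ib Y)) = lie Y A := t
    rw [hS Y A, ← hnab.torsion_free Y A] at t'
    linear_combination (norm := abel) -t'
  -- S is skew in its last two (implicit) arguments and in the outer ones
  have hSmet : ∀ A Y Z : Xv, ev (gf (S A Y)) Z + ev (gf Y) (S A Z) = 0 := by
    intro A Y Z
    have e1 := metP (ebm gf ib A) Y Z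
    have e2 := hnab.metric A Y Z
    simp only [gsc] at e2
    have e1' : act A (ev (gf Y) Z)
        = ev (gf (nab A Y + S A Y)) Z + ev (gf Y) (nab A Z + S A Z) := by
      rw [← hS A Y, ← hS A Z]; exact e1
    rw [hg.add, hev.add_left, hev.add_right] at e1'
    linear_combination e2 - e1'
  have hTmet : ∀ A Y Z : Xv, ev (gf (S Y A)) Z + ev (gf Y) (S Z A) = 0 := by
    intro A Y Z
    have e1 := metM (ebp gf ib A) Y Z
    have e2 := hnab.metric A Y Z
    simp only [gsc] at e2
    have e1' : act A (ev (gf Y) Z)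
        = ev (gf (nab A Y + S Y A)) Z + ev (gf Y) (nab A Z + S Z A) := by
      rw [← hT A Y, ← hT A Z]; exact e1
    rw [hg.add, hev.add_left, hev.add_right] at e1'
    linear_combination e2 - e1'
  -- the trilinear form of S is alternating
  have rel1 : ∀ A Y Z : Xv, ev (gf (S A Y)) Z = - ev (gf (S A Z)) Y := by
    intro A Y Z
    have := hSmet A Y Z
    rw [hg.symm Y (S A Z)] at this
    linear_combination this
  have rel2 : ∀ A Y Z : Xv, ev (gf (S Y A)) Z = - ev (gf (S Z A)) Y := by
    intro A Y Z
    have := hTmet A Y Z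
    rw [hg.symm Y (S Z A)] at this
    linear_combination this
  have rel12 : ∀ A Y Z : Xv, ev (gf (S A Y)) Z = - ev (gf (S Y A)) Z := by
    intro A Y Z
    calc ev (gf (S A Y)) Z = - ev (gf (S A Z)) Y := rel1 A Y Z
    _ = ev (gf (S Y Z)) A := by rw [rel2 Z A Y, neg_neg]
    _ = - ev (gf (S Y A)) Z := by rw [rel1 Y Z A]
  have hSanti : ∀ A Y : Xv, S Y A = - S A Y := by
    intro A Y
    have key : ∀ Z, ev (gf (S Y A + S A Y)) Z = 0 := by
      intro Z
      rw [hg.add, hev.add_left, rel12 A Y Z]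
      ring
    have h0 := g_nondeg hev hg _ key
    linear_combination (norm := abel) h0
  -- the 3-form φ
  have hiph : IsThreeFormMap ev (fun A Y => (2:ℝ) • gf (S A Y)) := by
    refine ⟨?_, ?_, ?_, ?_, ?_, ?_⟩
    · -- add_left
      intro A B Y
      have : S (A + B) Y = S A Y + S B Y := by
        simp only [hSdef, ebm_add hg hb, hconn.add_left, decP_add hg hb, hnab.add_left]
        abel
      show (2:ℝ) • gf (S (A + B) Y) = (2:ℝ) • gf (S A Y) + (2:ℝ) • gf (S B Y)
      rw [this, hg.add, smul_add]
    · -- smul_left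
      intro f A Y
      have : S (f • A) Y = f • S A Y := by
        simp only [hSdef, ebm_smul hg hb, hconn.smul_left, decP_smul hg hb, hnab.smul_left,
          smul_sub]
      show (2:ℝ) • gf (S (f • A) Y) = f • ((2:ℝ) • gf (S A Y))
      rw [this, hg.smul, smul_comm]
    · -- add_right
      intro A Y Z
      have : S A (Y + Z) = S A Y + S A Z := by
        simp only [hSdef, ebp_add hg hb, hconn.add_right, decP_add hg hb, hnab.add_right]
        abel
      show (2:ℝ) • gf (S A (Y + Z)) = (2:ℝ) • gf (S A Y) + (2:ℝ) • gf (S A Z)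
      rw [this, hg.add, smul_add]
    · -- smul_right
      intro A f Y
      have : S A (f • Y) = f • S A Y := by
        simp only [hSdef, ebp_smul hg hb, hconn.leibniz, decP_add hg hb, decP_smul hg hb,
          hnab.leibniz, decP_ebp hg]
        have h1 : (ebm gf ib A).1 = A := rfl
        rw [h1]
        module
      show (2:ℝ) • gf (S A (f • Y)) = f • ((2:ℝ) • gf (S A Y))
      rw [this, hg.smul, smul_comm]
    · -- alt12
      intro A Y Z
      show ev ((2:ℝ) • gf (S A Y)) Z = - ev ((2:ℝ) • gf (S Y A)) Z
      rw [ev_smulR_left hev, ev_smulR_left hev, rel12 A Y Z, smul_neg]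
    · -- alt23
      intro A Y Z
      show ev ((2:ℝ) • gf (S A Y)) Z = - ev ((2:ℝ) • gf (S A Z)) Y
      rw [ev_smulR_left hev, ev_smulR_left hev, rel1 A Y Z, smul_neg]
  refine ⟨fun A Y => (2:ℝ) • gf (S A Y), ⟨hiph, ?_, ?_⟩, ?_⟩
  · -- D = Dphib
    have hhalf : ∀ A Y : Xv,
        (2:ℝ)⁻¹ • gs ((2:ℝ) • gf (S A Y)) = S A Y := by
      intro A Y
      rw [gs_smulR hg, hg.sharp_flat, smul_smul]
      norm_num
    have case_pp : ∀ A Y : Xv, D (ebp gf ib A) (ebp gf ib Y)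
        = Dphib gf gs ib nab (fun A Y => (2:ℝ) • gf (S A Y)) (ebp gf ib A) (ebp gf ib Y) := by
      intro A Y
      rw [Dphib_pp hg hb hnab hiph, presP (ebp gf ib A) Y, hn1 A Y]
    have case_mp : ∀ A Y : Xv, D (ebm gf ib A) (ebp gf ib Y)
        = Dphib gf gs ib nab (fun A Y => (2:ℝ) • gf (S A Y)) (ebm gf ib A) (ebp gf ib Y) := by
      intro A Y
      rw [Dphib_mp hg hb hnab hiph, presP (ebm gf ib A) Y, hS A Y]
      congr 1
      show nab A Y + S A Y = nab A Y + (2:ℝ)⁻¹ • gs ((2:ℝ) • gf (S A Y))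
      rw [hhalf A Y]
    have case_pm : ∀ A Y : Xv, D (ebp gf ib A) (ebm gf ib Y)
        = Dphib gf gs ib nab (fun A Y => (2:ℝ) • gf (S A Y)) (ebp gf ib A) (ebm gf ib Y) := by
      intro A Y
      rw [Dphib_pm hg hb hnab hiph, presM (ebp gf ib A) Y, hT A Y]
      congr 1
      show nab A Y + S Y A = nab A Y - (2:ℝ)⁻¹ • gs ((2:ℝ) • gf (S A Y))
      rw [hhalf A Y, hSanti A Y]
      abel
    have case_mm : ∀ A Y : Xv, D (ebm gf ib A) (ebm gf ib Y)
        = Dphib gf gs ib nab (fun A Y => (2:ℝ) • gf (S A Y)) (ebm gf ib A) (ebm gf ib Y) := by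
      intro A Y
      rw [Dphib_mm hg hb hnab hiph, presM (ebm gf ib A) Y, hn4 A Y]
    funext x y
    have hgc := Dphib_genconn hds hg hb hnab hiph
    obtain ⟨X1, X2, hx⟩ : ∃ A B, x = ebp gf ib A + ebm gf ib B :=
      ⟨_, _, (decomp hg hb x).symm⟩
    obtain ⟨Y1, Y2, hy⟩ : ∃ A B, y = ebp gf ib A + ebm gf ib B :=
      ⟨_, _, (decomp hg hb y).symm⟩
    subst hx hy
    rw [hconn.add_left, hconn.add_right, hconn.add_right, hgc.add_left, hgc.add_right,
      hgc.add_right, case_pp, case_mp, case_pm, case_mm]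
  · -- the recovery formula
    intro X Y Z
    rw [ev_smulR_left hev, presP (ebm gf ib X) Y]
    show (2:ℝ) • ev (gf (S X Y)) Z
      = (2:ℝ) • gsc ev gf (decP gs ib (D (ebm gf ib X) (ebp gf ib Y)) - nab X Y) Z
    rfl
  · -- uniqueness
    intro iph' hiph' hD'
    funext A Y
    have h1 : D (ebm gf ib A) (ebp gf ib Y)
        = ebp gf ib (nabP gs nab iph' A Y) := by
      rw [hD', Dphib_mp hg hb hnab hiph']
    have h2 : nab A Y + S A Y = nabP gs nab iph' A Y := by
      have := congrArg (decP gs ib) h1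
      rw [decP_ebp hg, hS A Y] at this
      exact this
    have h3 : gs (iph' A Y) = (2:ℝ) • S A Y := by
      have h4 : (2:ℝ)⁻¹ • gs (iph' A Y) = S A Y := by
        have : nabP gs nab iph' A Y - nab A Y = (2:ℝ)⁻¹ • gs (iph' A Y) := by
          simp only [nabP]; abel
        rw [← this, ← h2]; abel
      calc gs (iph' A Y) = (2:ℝ) • ((2:ℝ)⁻¹ • gs (iph' A Y)) := by
            rw [smul_smul]; norm_num
      _ = (2:ℝ) • S A Y := by rw [h4]
    calc iph' A Y = gf (gs (iph' A Y)) := (hg.flat_sharp _).symm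
    _ = gf ((2:ℝ) • S A Y) := by rw [h3]
    _ = (2:ℝ) • gf (S A Y) := gf_smulR hg _ _

end Aux

/-!
STATEMENT 1.  Fix a generalized metric `G^b` on `M` determined by `(g,b)`.  The
`TM`-torsion free `G^b`-metric connections on `𝕋M` are classified by 3-forms
`φ ∈ Ω³(M)`: for every `φ` there is a unique `TM`-torsion free `G^b`-metric
connection `D^{φ,b}` whose `G^b`-eigendecomposition is
`D^{φ,b}_{x^{b±}} y^{b±} = ∇_X Y + (b±g)(∇_X Y)` and
`D^{φ,b}_{x^{b∓}} y^{b±} = ∇^{±φ}_X Y + (b±g)(∇^{±φ}_X Y)`;  conversely, every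
`TM`-torsion free `G^b`-metric connection `D^𝕋` equals `D^{φ,b}` for exactly one
`φ ∈ Ω³(M)`, recovered by `φ(X,Y,Z) = 2 g(π(D^𝕋_{x^{b−}} y^{b+}) − ∇_X Y, Z)`.
Moreover, in the splitting `𝕋M = TM ⊕ T*M`,
`D^{φ,b}_{e^b x}(e^b y) = e^b[ ∇_X y + ¼ g⁻¹(ι_{g⁻¹η} ι_X φ − ι_Y ι_{g⁻¹ξ} φ)
   + ¼(ι_Y ι_X φ − ι_{g⁻¹η} ι_{g⁻¹ξ} φ) ]` for `x = X+ξ`, `y = Y+η`.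
-/
theorem stmt_1
    {C : Type} [CommRing C] [Algebra ℝ C]
    {Xv : Type} [AddCommGroup Xv] [Module C Xv] [Module ℝ Xv] [IsScalarTower ℝ C Xv]
    {Θ : Type} [AddCommGroup Θ] [Module C Θ] [Module ℝ Θ] [IsScalarTower ℝ C Θ]
    (act : Xv → C → C) (lie : Xv → Xv → Xv) (ev : Θ → Xv → C)
    (hds : IsDiffStructure act lie) (hev : IsEvStructure ev)
    (gf : Xv → Θ) (gs : Θ → Xv) (hg : IsRiemannian ev gf gs)
    (ib : Xv → Θ) (hb : IsTwoFormMap ev ib)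
    (nab : Xv → Xv → Xv) (hnab : IsLeviCivita act lie ev gf nab)
    (nabT : Xv → Θ → Θ) (hnabT : IsNabTheta act ev nab nabT) :
    -- (1) each 3-form `φ` yields a `TM`-torsion free `G^b`-metric connection `D^{φ,b}`
    --     with the stated `G^b`-eigendecomposition and the stated formula in the
    --     splitting `𝕋M = TM ⊕ T*M`:
    (∀ iph : Xv → Xv → Θ, IsThreeFormMap ev iph →
      IsGenConn act (Dphib gf gs ib nab iph) ∧
      TorsionFree lie (Dphib gf gs ib nab iph) ∧
      IsMetricConn act ev gf gs ib (Dphib gf gs ib nab iph) ∧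
      (∀ X Y : Xv,
        Dphib gf gs ib nab iph (ebp gf ib X) (ebp gf ib Y) = ebp gf ib (nab X Y) ∧
        Dphib gf gs ib nab iph (ebm gf ib X) (ebm gf ib Y) = ebm gf ib (nab X Y) ∧
        Dphib gf gs ib nab iph (ebm gf ib X) (ebp gf ib Y)
          = ebp gf ib (nabP gs nab iph X Y) ∧
        Dphib gf gs ib nab iph (ebp gf ib X) (ebm gf ib Y)
          = ebm gf ib (nabM gs nab iph X Y)) ∧
      (∀ (X Y : Xv) (ξ η : Θ),
        Dphib gf gs ib nab iph (ebMap ib (X, ξ)) (ebMap ib (Y, η))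
          = ebMap ib
              (nab X Y + (4:ℝ)⁻¹ • gs (iph X (gs η) - iph (gs ξ) Y),
               nabT X η + (4:ℝ)⁻¹ • (iph X Y - iph (gs ξ) (gs η))))) ∧
    -- (2) conversely, every `TM`-torsion free `G^b`-metric connection is `D^{φ,b}`
    --     for exactly one 3-form `φ`, recovered by
    --     `φ(X,Y,Z) = 2 g(π(D_{x^{b−}} y^{b+}) − ∇_X Y, Z)`:
    (∀ D : TT Xv Θ → TT Xv Θ → TT Xv Θ,
      IsGenConn act D → TorsionFree lie D → IsMetricConn act ev gf gs ib D →
      ∃ iph : Xv → Xv → Θ,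
        (IsThreeFormMap ev iph ∧ D = Dphib gf gs ib nab iph ∧
          (∀ X Y Z : Xv,
            ev (iph X Y) Z
              = (2:ℝ) • gsc ev gf ((D (ebm gf ib X) (ebp gf ib Y)).1 - nab X Y) Z)) ∧
        (∀ iph' : Xv → Xv → Θ,
          IsThreeFormMap ev iph' → D = Dphib gf gs ib nab iph' → iph' = iph)) := by
  constructor
  · intro iph hiph
    refine ⟨Dphib_genconn hds hg hb hnab hiph, Dphib_torsionfree hev hg hnab hiph,
      Dphib_metricconn hds hev hg hb hnab hiph, ?_, ?_⟩
    · intro X Y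
      exact ⟨Dphib_pp hg hb hnab hiph X Y, Dphib_mm hg hb hnab hiph X Y,
        Dphib_mp hg hb hnab hiph X Y, Dphib_pm hg hb hnab hiph X Y⟩
    · intro X Y ξ η
      exact Dphib_ebMap hds hev hg hb hnab hiph hnabT X Y ξ η
  · intro D hconn htf hmet
    exact converse_part hds hev hg hb hnab D hconn htf hmet

end GenGeom
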